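/- arXiv:2305.06570 — 3 statements merged into one kernel-verified Lean document; each statement's English description precedes it below -/
import Mathlib

section
/- For every infinite sequence X over a finite alphabet Σ₁ (with |Σ₁| ≥ 2) and every infinite sequence Y over a finite alphabet Σ₂, the conditional block entropy rate satisfies H(X|Y) ≤ dim_FS^Y(X). -/
open Filter

/-- A finite-state gambler over alphabet `α` with state space `Fin (m+1)`. -/
structure FSG (α : Type) [Fintype α] (m : ℕ) where
  δ : Fin (m + 1) → α → Fin (m + 1)
  bet : Fin (m + 1) → α → ℚ
  bet_nonneg : ∀ q a, 0 ≤ bet q a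
  bet_sum : ∀ q, ∑ a, bet q a = 1
  q₀ : Fin (m + 1)

namespace FSG

variable {α : Type} [Fintype α] {m : ℕ}

/-- The state reached after reading the first `n` symbols of `X`. -/
def state (G : FSG α m) (X : ℕ → α) : ℕ → Fin (m + 1)
  | 0 => G.q₀
  | n + 1 => G.δ (G.state X n) (X n)

/-- The value of the `s`-gale of `G` on the prefix `X[:n]`. -/
noncomputable def capital (G : FSG α m) (s : ℝ) (X : ℕ → α) : ℕ → ℝ
  | 0 => 1
  | n + 1 => (Fintype.card α : ℝ) ^ s * (G.bet (G.state X n) (X n) : ℝ) * G.capital s X n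

/-- The `s`-gale of `G` succeeds on `X` : `limsup_n d(X[:n]) = ∞`. -/
def Succeeds (G : FSG α m) (s : ℝ) (X : ℕ → α) : Prop :=
  ∀ C : ℝ, ∃ n, C < G.capital s X n

/-- The `s`-gale of `G` strongly succeeds on `X` : `liminf_n d(X[:n]) = ∞`. -/
def StrSucceeds (G : FSG α m) (s : ℝ) (X : ℕ → α) : Prop :=
  Tendsto (G.capital s X) atTop atTop

end FSG

/-- Finite-state dimension of a sequence. -/
noncomputable def dimFS {α : Type} [Fintype α] (X : ℕ → α) : ℝ :=
  sInf {s : ℝ | 0 ≤ s ∧ ∃ (m : ℕ) (G : FSG α m), G.Succeeds s X}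

/-- Finite-state strong dimension of a sequence. -/
noncomputable def DimFS {α : Type} [Fintype α] (X : ℕ → α) : ℝ :=
  sInf {s : ℝ | 0 ≤ s ∧ ∃ (m : ℕ) (G : FSG α m), G.StrSucceeds s X}

/-- A finite-state relative gambler over input alphabet `α`, oracle alphabet `β`,
oracle window length `ℓ`, with state space `Fin (m+1)`. -/
structure FSRG (α β : Type) [Fintype α] [Fintype β] (ℓ m : ℕ) where
  δ : Fin (m + 1) → (Fin ℓ → β) → α → Fin (m + 1)
  bet : Fin (m + 1) → (Fin ℓ → β) → α → ℚ
  bet_nonneg : ∀ q y a, 0 ≤ bet q y a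
  bet_sum : ∀ q y, ∑ a, bet q y a = 1
  q₀ : Fin (m + 1)

namespace FSRG

variable {α β : Type} [Fintype α] [Fintype β] {ℓ m : ℕ}

/-- The state reached after reading the first `n` symbols of `X`, with oracle `Y`
(the oracle window at step `i` being `Y[i:i+ℓ]`). -/
def state (G : FSRG α β ℓ m) (Y : ℕ → β) (X : ℕ → α) : ℕ → Fin (m + 1)
  | 0 => G.q₀
  | n + 1 => G.δ (G.state Y X n) (fun j => Y (n + j.val)) (X n)

/-- The value of the `s`-gale of `G` with oracle `Y` on the prefix `X[:n]`. -/
noncomputable def capital (G : FSRG α β ℓ m) (s : ℝ) (Y : ℕ → β) (X : ℕ → α) : ℕ → ℝ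
  | 0 => 1
  | n + 1 =>
      (Fintype.card α : ℝ) ^ s * (G.bet (G.state Y X n) (fun j => Y (n + j.val)) (X n) : ℝ) *
        G.capital s Y X n

/-- Success: `limsup_n d(X[:n]) = ∞`. -/
def Succeeds (G : FSRG α β ℓ m) (s : ℝ) (Y : ℕ → β) (X : ℕ → α) : Prop :=
  ∀ C : ℝ, ∃ n, C < G.capital s Y X n

/-- Strong success: `liminf_n d(X[:n]) = ∞`. -/
def StrSucceeds (G : FSRG α β ℓ m) (s : ℝ) (Y : ℕ → β) (X : ℕ → α) : Prop :=
  Tendsto (G.capital s Y X) atTop atTop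

end FSRG

/-- Finite-state relative dimension `dim_FS^Y(X)`. -/
noncomputable def dimFSRel {α β : Type} [Fintype α] [Fintype β] (X : ℕ → α) (Y : ℕ → β) : ℝ :=
  sInf {s : ℝ | 0 ≤ s ∧ ∃ (ℓ m : ℕ) (G : FSRG α β ℓ m), G.Succeeds s Y X}

/-- Finite-state relative strong dimension `Dim_FS^Y(X)`. -/
noncomputable def DimFSRel {α β : Type} [Fintype α] [Fintype β] (X : ℕ → α) (Y : ℕ → β) : ℝ :=
  sInf {s : ℝ | 0 ≤ s ∧ ∃ (ℓ m : ℕ) (G : FSRG α β ℓ m), G.StrSucceeds s Y X}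

open Classical in
/-- `N(u,x;v,y)`: the number of indices `i < k` such that the `i`-th disjoint block of
length `ℓ` of `X` equals `u` and that of `Y` equals `v`. -/
noncomputable def blockCount {α β : Type} (X : ℕ → α) (Y : ℕ → β) (ℓ k : ℕ)
    (u : Fin ℓ → α) (v : Fin ℓ → β) : ℕ :=
  ((Finset.range k).filter fun i =>
    (∀ j : Fin ℓ, X (i * ℓ + j.val) = u j) ∧ ∀ j : Fin ℓ, Y (i * ℓ + j.val) = v j).card

/-- The `ℓ`-length conditional block entropy `H_ℓ(X[:kℓ] | Y[:kℓ])`.  (Terms with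
`N(u,x;v,y) = 0` vanish since `0 · log 0 = 0` under Mathlib's convention `log 0 = 0`.) -/
noncomputable def condBlockEntropy {α β : Type} [Fintype α] [Fintype β]
    (X : ℕ → α) (Y : ℕ → β) (ℓ k : ℕ) : ℝ :=
  -(1 / (ℓ * Real.log (Fintype.card α))) *
    ∑ v : Fin ℓ → β, ∑ u : Fin ℓ → α,
      ((blockCount X Y ℓ k u v : ℝ) / k) *
        Real.log ((blockCount X Y ℓ k u v : ℝ) /
          ∑ u' : Fin ℓ → α, (blockCount X Y ℓ k u' v : ℝ))

/-- `H_ℓ(X|Y) = liminf_{k → ∞} H_ℓ(X[:kℓ] | Y[:kℓ])`. -/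
noncomputable def relBlockEntropyAt {α β : Type} [Fintype α] [Fintype β]
    (X : ℕ → α) (Y : ℕ → β) (ℓ : ℕ) : ℝ :=
  liminf (fun k => condBlockEntropy X Y ℓ k) atTop

/-- `H(X|Y) = inf_{ℓ ≥ 1} H_ℓ(X|Y)`. -/
noncomputable def relBlockEntropy {α β : Type} [Fintype α] [Fintype β]
    (X : ℕ → α) (Y : ℕ → β) : ℝ :=
  ⨅ ℓ : ℕ, relBlockEntropyAt X Y (ℓ + 1)

/-- `H̄_ℓ(X|Y) = limsup_{k → ∞} H_ℓ(X[:kℓ] | Y[:kℓ])`. -/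
noncomputable def relUpperBlockEntropyAt {α β : Type} [Fintype α] [Fintype β]
    (X : ℕ → α) (Y : ℕ → β) (ℓ : ℕ) : ℝ :=
  limsup (fun k => condBlockEntropy X Y ℓ k) atTop

/-- `H̄(X|Y) = inf_{ℓ ≥ 1} H̄_ℓ(X|Y)`. -/
noncomputable def relUpperBlockEntropy {α β : Type} [Fintype α] [Fintype β]
    (X : ℕ → α) (Y : ℕ → β) : ℝ :=
  ⨅ ℓ : ℕ, relUpperBlockEntropyAt X Y (ℓ + 1)

/-- The arithmetic-progression subsequence `A_{d,a}(X) = X[a] X[a+d] X[a+2d] …`. -/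
def AP {α : Type} (X : ℕ → α) (d a : ℕ) : ℕ → α := fun n => X (a + n * d)

/-- The product sequence of a family of sequences: its `n`-th symbol is the tuple
of the `n`-th symbols. -/
def prodSeq {α ι : Type} (Ys : ι → ℕ → α) : ℕ → ι → α := fun n i => Ys i n

/-- Relative dimension with a finite family of oracle sequences, via the product sequence. -/
noncomputable def dimFSRelFam {α ι : Type} [Fintype α] [Fintype ι] [DecidableEq ι]
    (X : ℕ → α) (Ys : ι → ℕ → α) : ℝ :=
  dimFSRel X (prodSeq Ys)

/-- Relative strong dimension with a finite family of oracle sequences. -/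
noncomputable def DimFSRelFam {α ι : Type} [Fintype α] [Fintype ι] [DecidableEq ι]
    (X : ℕ → α) (Ys : ι → ℕ → α) : ℝ :=
  DimFSRel X (prodSeq Ys)

/-- The interleaving `Y₀ ⊕ ⋯ ⊕ Y_{n-1}`: the `i`-th symbol is `Y_{i mod n}[⌊i/n⌋]`. -/
def interleave {α : Type} {n : ℕ} (hn : 0 < n) (Ys : Fin n → ℕ → α) : ℕ → α :=
  fun i => Ys ⟨i % n, Nat.mod_lt i hn⟩ (i / n)

/-- The interleaving `A ⊕ B` of two sequences. -/
def interleave2 {α : Type} (A B : ℕ → α) : ℕ → α :=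
  fun i => if i % 2 = 0 then A (i / 2) else B (i / 2)

section Aux
open Finset
variable {α β : Type} [Fintype α] [Fintype β] {ℓ m : ℕ}

namespace FSRG

/-- run from an arbitrary state. -/
def run (G : FSRG α β ℓ m) (q : Fin (m+1)) (Y' : ℕ → β) (X' : ℕ → α) : ℕ → Fin (m+1)
  | 0 => q
  | n+1 => G.δ (G.run q Y' X' n) (fun j => Y' (n + j.val)) (X' n)

lemma state_eq_run (G : FSRG α β ℓ m) (Y : ℕ → β) (X : ℕ → α) (n : ℕ) :
    G.state Y X n = G.run G.q₀ Y X n := by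
  induction n with
  | zero => rfl
  | succ n ih => rw [state, run, ih]

lemma run_add (G : FSRG α β ℓ m) (q : Fin (m+1)) (Y' : ℕ → β) (X' : ℕ → α) (n t : ℕ) :
    G.run q Y' X' (n + t) =
      G.run (G.run q Y' X' n) (fun i => Y' (n + i)) (fun i => X' (n + i)) t := by
  induction t with
  | zero => rfl
  | succ t ih =>
      rw [← Nat.add_assoc, run, run, ih]
      congr 1
      funext j
      rw [Nat.add_assoc]

lemma run_congr (G : FSRG α β ℓ m) (q : Fin (m+1)) {Y' Y'' : ℕ → β} {X' X'' : ℕ → α} (n : ℕ)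
    (hY : ∀ i < n + ℓ, Y' i = Y'' i) (hX : ∀ i < n, X' i = X'' i) :
    G.run q Y' X' n = G.run q Y'' X'' n := by
  induction n with
  | zero => rfl
  | succ n ih =>
      rw [run, run, ih (fun i hi => hY i (by omega)) (fun i hi => hX i (by omega)),
        hX n (by omega)]
      congr 1
      funext j
      exact hY (n + j.val) (by omega)

/-- single bet along the run. -/
noncomputable def stepBet (G : FSRG α β ℓ m) (q : Fin (m+1)) (Y' : ℕ → β) (X' : ℕ → α)
    (t : ℕ) : ℝ :=
  (G.bet (G.run q Y' X' t) (fun j => Y' (t + j.val)) (X' t) : ℝ)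

/-- product of bets along the run. -/
noncomputable def blockBet (G : FSRG α β ℓ m) (q : Fin (m+1)) (Y' : ℕ → β) (X' : ℕ → α)
    (n : ℕ) : ℝ :=
  ∏ t ∈ Finset.range n, G.stepBet q Y' X' t

lemma stepBet_nonneg (G : FSRG α β ℓ m) (q : Fin (m+1)) (Y' : ℕ → β) (X' : ℕ → α) (t : ℕ) :
    0 ≤ G.stepBet q Y' X' t := by
  have := G.bet_nonneg (G.run q Y' X' t) (fun j => Y' (t + j.val)) (X' t)
  unfold stepBet
  exact_mod_cast this

lemma bet_le_one (G : FSRG α β ℓ m) (q : Fin (m+1)) (y : Fin ℓ → β) (a : α) :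
    G.bet q y a ≤ 1 := by
  have h := Finset.single_le_sum (f := fun a => G.bet q y a)
    (fun i _ => G.bet_nonneg q y i) (Finset.mem_univ a)
  rw [G.bet_sum q y] at h
  exact h

lemma stepBet_le_one (G : FSRG α β ℓ m) (q : Fin (m+1)) (Y' : ℕ → β) (X' : ℕ → α) (t : ℕ) :
    G.stepBet q Y' X' t ≤ 1 := by
  have := G.bet_le_one (G.run q Y' X' t) (fun j => Y' (t + j.val)) (X' t)
  unfold stepBet
  exact_mod_cast this

lemma blockBet_nonneg (G : FSRG α β ℓ m) (q : Fin (m+1)) (Y' : ℕ → β) (X' : ℕ → α) (n : ℕ) :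
    0 ≤ G.blockBet q Y' X' n :=
  Finset.prod_nonneg fun t _ => G.stepBet_nonneg q Y' X' t

lemma blockBet_le_one (G : FSRG α β ℓ m) (q : Fin (m+1)) (Y' : ℕ → β) (X' : ℕ → α) (n : ℕ) :
    G.blockBet q Y' X' n ≤ 1 :=
  Finset.prod_le_one (fun t _ => G.stepBet_nonneg q Y' X' t)
    (fun t _ => G.stepBet_le_one q Y' X' t)

lemma stepBet_shift (G : FSRG α β ℓ m) (q : Fin (m+1)) (Y' : ℕ → β) (X' : ℕ → α) (n t : ℕ) :
    G.stepBet q Y' X' (n + t) =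
      G.stepBet (G.run q Y' X' n) (fun i => Y' (n + i)) (fun i => X' (n + i)) t := by
  unfold stepBet
  rw [run_add, show (fun j : Fin ℓ => Y' (n + t + j.val)) =
    (fun j : Fin ℓ => Y' (n + (t + j.val))) from funext fun j => by rw [Nat.add_assoc]]

lemma stepBet_congr (G : FSRG α β ℓ m) (q : Fin (m+1)) {Y' Y'' : ℕ → β} {X' X'' : ℕ → α}
    {n : ℕ} (t : ℕ) (ht : t < n)
    (hY : ∀ i < n + ℓ, Y' i = Y'' i) (hX : ∀ i < n, X' i = X'' i) :
    G.stepBet q Y' X' t = G.stepBet q Y'' X'' t := by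
  unfold stepBet
  rw [G.run_congr q t (fun i hi => hY i (by omega)) (fun i hi => hX i (by omega)),
    hX t ht, show (fun j : Fin ℓ => Y' (t + j.val)) = (fun j : Fin ℓ => Y'' (t + j.val))
      from funext fun j => hY _ (by omega)]

lemma blockBet_congr (G : FSRG α β ℓ m) (q : Fin (m+1)) {Y' Y'' : ℕ → β} {X' X'' : ℕ → α}
    (n : ℕ) (hY : ∀ i < n + ℓ, Y' i = Y'' i) (hX : ∀ i < n, X' i = X'' i) :
    G.blockBet q Y' X' n = G.blockBet q Y'' X'' n :=
  Finset.prod_congr rfl fun t htm =>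
    G.stepBet_congr q t (Finset.mem_range.mp htm) hY hX

lemma blockBet_add (G : FSRG α β ℓ m) (q : Fin (m+1)) (Y' : ℕ → β) (X' : ℕ → α) (n t : ℕ) :
    G.blockBet q Y' X' (n + t) =
      G.blockBet q Y' X' n *
        G.blockBet (G.run q Y' X' n) (fun i => Y' (n + i)) (fun i => X' (n + i)) t := by
  unfold blockBet
  rw [Finset.prod_range_add]
  congr 1
  exact Finset.prod_congr rfl fun i _ => G.stepBet_shift q Y' X' n i

lemma capital_eq_blockBet (G : FSRG α β ℓ m) (hc : 0 < Fintype.card α) (s : ℝ)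
    (Y : ℕ → β) (X : ℕ → α) (n : ℕ) :
    G.capital s Y X n = (Fintype.card α : ℝ) ^ (s * n) * G.blockBet G.q₀ Y X n := by
  have hc0 : (0:ℝ) < (Fintype.card α : ℝ) := by exact_mod_cast hc
  induction n with
  | zero => simp [capital, blockBet]
  | succ n ih =>
      rw [capital, ih]
      have hbb : G.blockBet G.q₀ Y X (n+1) = G.blockBet G.q₀ Y X n * G.stepBet G.q₀ Y X n := by
        rw [blockBet, blockBet, Finset.prod_range_succ]
      have hstep : (G.bet (G.state Y X n) (fun j => Y (n + j.val)) (X n) : ℝ) =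
          G.stepBet G.q₀ Y X n := by
        rw [stepBet, G.state_eq_run]
      rw [hbb, hstep]
      have : (Fintype.card α : ℝ) ^ (s * (n+1 : ℕ)) =
          (Fintype.card α : ℝ) ^ s * (Fintype.card α : ℝ) ^ (s * n) := by
        rw [← Real.rpow_add hc0]
        congr 1
        push_cast
        ring
      rw [this]
      ring

lemma capital_add_le (G : FSRG α β ℓ m) (hc : 0 < Fintype.card α) (s : ℝ)
    (Y : ℕ → β) (X : ℕ → α) (n t : ℕ) :
    G.capital s Y X (n + t) ≤ G.capital s Y X n * (Fintype.card α : ℝ) ^ (s * t) := by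
  have hc0 : (0:ℝ) < (Fintype.card α : ℝ) := by exact_mod_cast hc
  rw [G.capital_eq_blockBet hc, G.capital_eq_blockBet hc, G.blockBet_add]
  have hsplit : (Fintype.card α : ℝ) ^ (s * (n + t : ℕ)) =
      (Fintype.card α : ℝ) ^ (s * n) * (Fintype.card α : ℝ) ^ (s * t) := by
    rw [← Real.rpow_add hc0]
    congr 1
    push_cast
    ring
  rw [hsplit]
  have h1 : G.blockBet (G.run G.q₀ Y X n) (fun i => Y (n + i)) (fun i => X (n + i)) t ≤ 1 :=
    G.blockBet_le_one _ _ _ t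
  have h2 : 0 ≤ G.blockBet (G.run G.q₀ Y X n) (fun i => Y (n + i)) (fun i => X (n + i)) t :=
    G.blockBet_nonneg _ _ _ t
  have h3 : 0 ≤ G.blockBet G.q₀ Y X n := G.blockBet_nonneg _ _ _ n
  have h4 : (0:ℝ) ≤ (Fintype.card α : ℝ) ^ (s * n) := (Real.rpow_pos_of_pos hc0 _).le
  have h5 : (0:ℝ) ≤ (Fintype.card α : ℝ) ^ (s * t) := (Real.rpow_pos_of_pos hc0 _).le
  calc (Fintype.card α : ℝ) ^ (s * n) * (Fintype.card α : ℝ) ^ (s * t) *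
        (G.blockBet G.q₀ Y X n * G.blockBet _ _ _ t)
      ≤ (Fintype.card α : ℝ) ^ (s * n) * (Fintype.card α : ℝ) ^ (s * t) *
        (G.blockBet G.q₀ Y X n * 1) := by
        apply mul_le_mul_of_nonneg_left _ (by positivity)
        exact mul_le_mul_of_nonneg_left h1 h3
    _ = (Fintype.card α : ℝ) ^ (s * n) * G.blockBet G.q₀ Y X n *
        (Fintype.card α : ℝ) ^ (s * t) := by ring

/-- extension of a tuple to an infinite sequence. -/
def ext (a₀ : α) {n : ℕ} (u : Fin n → α) : ℕ → α :=
  fun i => if h : i < n then u ⟨i, h⟩ else a₀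

lemma sum_blockBet (G : FSRG α β ℓ m) (a₀ : α) (n : ℕ) (q : Fin (m+1)) (Y' : ℕ → β) :
    ∑ u : Fin n → α, G.blockBet q Y' (ext a₀ u) n = 1 := by
  induction n generalizing q Y' with
  | zero =>
      have hbb : ∀ u : Fin 0 → α, G.blockBet q Y' (ext a₀ u) 0 = 1 := fun u => by
        simp [blockBet]
      simp only [hbb]
      simp
  | succ n ih =>
      rw [← Equiv.sum_comp (Fin.consEquiv (fun _ : Fin (n+1) => α))
        (fun u => G.blockBet q Y' (ext a₀ u) (n+1)), Fintype.sum_prod_type]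
      have hw0 : (fun j : Fin ℓ => Y' (0 + j.val)) = fun j : Fin ℓ => Y' j.val := by
        funext j; rw [Nat.zero_add]
      have key : ∀ (a : α) (u' : Fin n → α),
          G.blockBet q Y' (ext a₀ ((Fin.consEquiv (fun _ : Fin (n+1) => α)) (a, u'))) (n+1) =
          (G.bet q (fun j => Y' j.val) a : ℝ) *
            G.blockBet (G.δ q (fun j => Y' j.val) a) (fun i => Y' (1 + i)) (ext a₀ u') n := by
        intro a u'
        have hcons : ((Fin.consEquiv (fun _ : Fin (n+1) => α)) (a, u')) = Fin.cons a u' := by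
          funext i; rw [Fin.consEquiv_apply]
        rw [hcons]
        have hx0 : ext a₀ (Fin.cons a u') 0 = a := by
          rw [ext, dif_pos (Nat.succ_pos n), Fin.mk_zero, Fin.cons_zero]
        have hxshift : (fun i => ext a₀ (Fin.cons a u') (1 + i)) = ext a₀ u' := by
          funext i
          simp only [ext]
          by_cases h : i < n
          · rw [dif_pos (show 1 + i < n + 1 by omega), dif_pos h]
            have : (⟨1 + i, by omega⟩ : Fin (n+1)) = (⟨i, h⟩ : Fin n).succ := by
              apply Fin.ext
              simp [Fin.succ]
              omega
            rw [this, Fin.cons_succ]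
          · rw [dif_neg (by omega), dif_neg h]
        have hsplit := G.blockBet_add q Y' (ext a₀ (Fin.cons a u')) 1 n
        rw [Nat.add_comm 1 n] at hsplit
        rw [hsplit]
        have hb1 : G.blockBet q Y' (ext a₀ (Fin.cons a u')) 1 =
            (G.bet q (fun j => Y' j.val) a : ℝ) := by
          rw [blockBet, Finset.prod_range_one, stepBet, run, hw0, hx0]
        have hr1 : G.run q Y' (ext a₀ (Fin.cons a u')) 1 = G.δ q (fun j => Y' j.val) a := by
          rw [run, run, hw0, hx0]
        rw [hb1, hr1, hxshift]
      simp only [key]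
      simp only [← Finset.mul_sum, ih, mul_one]
      rw [← Rat.cast_sum, G.bet_sum]
      norm_num

end FSRG

/-- Gibbs' inequality: cross "entropy" bound. -/
lemma gibbs_aux {ι : Type} [Fintype ι] (N : ι → ℝ) (Q : ι → ℝ)
    (hN : ∀ i, 0 ≤ N i) (hQ : ∀ i, 0 ≤ Q i) (hQs : ∑ i, Q i ≤ 1)
    (hpos : ∀ i, 0 < N i → 0 < Q i) :
    ∑ i, N i * Real.log (Q i) ≤ ∑ i, N i * Real.log (N i / ∑ j, N j) := by
  set M : ℝ := ∑ j, N j with hM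
  have hM0 : 0 ≤ M := Finset.sum_nonneg fun i _ => hN i
  have hterm : ∀ i, N i * Real.log (Q i) - N i * Real.log (N i / M) ≤ Q i * M - N i := by
    intro i
    rcases eq_or_lt_of_le (hN i) with h0 | h0
    · rw [← h0]
      simp only [zero_mul, sub_zero, sub_self]
      have := mul_nonneg (hQ i) hM0
      linarith
    · have hQi := hpos i h0
      have hMp : 0 < M := lt_of_lt_of_le h0 (Finset.single_le_sum (fun j _ => hN j)
        (Finset.mem_univ i))
      have harg : 0 < Q i * M / N i := by positivity
      have hlog : Real.log (Q i * M / N i) = Real.log (Q i) - Real.log (N i / M) := by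
        rw [Real.log_div (by positivity : Q i * M ≠ 0) (ne_of_gt h0),
          Real.log_mul (ne_of_gt hQi) (ne_of_gt hMp),
          Real.log_div (ne_of_gt h0) (ne_of_gt hMp)]
        ring
      have hle := Real.log_le_sub_one_of_pos harg
      have : N i * Real.log (Q i * M / N i) ≤ N i * (Q i * M / N i - 1) :=
        mul_le_mul_of_nonneg_left hle (hN i)
      have heq : N i * (Q i * M / N i - 1) = Q i * M - N i := by
        field_simp
      calc N i * Real.log (Q i) - N i * Real.log (N i / M)
          = N i * Real.log (Q i * M / N i) := by rw [hlog]; ring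
        _ ≤ N i * (Q i * M / N i - 1) := this
        _ = Q i * M - N i := heq
  have hsum : ∑ i, (N i * Real.log (Q i) - N i * Real.log (N i / M)) ≤
      ∑ i, (Q i * M - N i) := Finset.sum_le_sum fun i _ => hterm i
  rw [Finset.sum_sub_distrib, Finset.sum_sub_distrib] at hsum
  have : ∑ i, Q i * M - ∑ i, N i ≤ 0 := by
    rw [← Finset.sum_mul]
    nlinarith
  linarith

namespace FSRG

lemma capital_nonneg (G : FSRG α β ℓ m) (hc : 0 < Fintype.card α) (s : ℝ)
    (Y : ℕ → β) (X : ℕ → α) (n : ℕ) : 0 ≤ G.capital s Y X n := by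
  rw [G.capital_eq_blockBet hc]
  exact mul_nonneg (Real.rpow_nonneg (Nat.cast_nonneg _) _) (G.blockBet_nonneg _ _ _ _)

lemma blockBet_blocks (G : FSRG α β ℓ m) (Y : ℕ → β) (X : ℕ → α) (L k : ℕ) :
    G.blockBet G.q₀ Y X (k * L) = ∏ j ∈ Finset.range k,
      G.blockBet (G.run G.q₀ Y X (j*L)) (fun i => Y (j*L + i)) (fun i => X (j*L + i)) L := by
  induction k with
  | zero => simp [blockBet]
  | succ k ih =>
      rw [Finset.prod_range_succ, ← ih, show (k+1)*L = k*L + L by ring, G.blockBet_add]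

end FSRG

open Finset in
lemma sum_blocks_eq {L k : ℕ} (X : ℕ → α) (Y : ℕ → β)
    (f : (Fin L → α) → (Fin L → β) → ℝ) :
    ∑ i ∈ Finset.range k, f (fun t => X (i*L + t.val)) (fun t => Y (i*L + t.val)) =
      ∑ v : Fin L → β, ∑ u : Fin L → α, (blockCount X Y L k u v : ℝ) * f u v := by
  classical
  have hN : ∀ (u : Fin L → α) (v : Fin L → β), (blockCount X Y L k u v : ℝ) * f u v =
      ∑ i ∈ Finset.range k, if ((∀ j : Fin L, X (i*L + j.val) = u j) ∧
        ∀ j : Fin L, Y (i*L + j.val) = v j) then f u v else 0 := by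
    intro u v
    rw [blockCount, Finset.card_filter]
    push_cast
    rw [Finset.sum_mul]
    refine Finset.sum_congr rfl fun i _ => ?_
    split <;> simp
  symm
  calc ∑ v : Fin L → β, ∑ u : Fin L → α, (blockCount X Y L k u v : ℝ) * f u v
      = ∑ v : Fin L → β, ∑ i ∈ Finset.range k, ∑ u : Fin L → α,
          (if ((∀ j : Fin L, X (i*L + j.val) = u j) ∧
            ∀ j : Fin L, Y (i*L + j.val) = v j) then f u v else 0) := by
        refine Finset.sum_congr rfl fun v _ => ?_
        simp only [hN]
        exact Finset.sum_comm
    _ = ∑ i ∈ Finset.range k, ∑ v : Fin L → β, ∑ u : Fin L → α,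
          (if ((∀ j : Fin L, X (i*L + j.val) = u j) ∧
            ∀ j : Fin L, Y (i*L + j.val) = v j) then f u v else 0) := Finset.sum_comm
    _ = ∑ i ∈ Finset.range k, f (fun t => X (i*L + t.val)) (fun t => Y (i*L + t.val)) := by
        refine Finset.sum_congr rfl fun i _ => ?_
        have hiff : ∀ (u : Fin L → α) (v : Fin L → β),
            ((∀ j : Fin L, X (i*L + j.val) = u j) ∧ ∀ j : Fin L, Y (i*L + j.val) = v j) ↔
            (u = (fun t => X (i*L + t.val)) ∧ v = (fun t => Y (i*L + t.val))) := by
          intro u v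
          constructor
          · rintro ⟨h1, h2⟩
            exact ⟨funext fun t => (h1 t).symm, funext fun t => (h2 t).symm⟩
          · rintro ⟨rfl, rfl⟩
            exact ⟨fun t => rfl, fun t => rfl⟩
        simp only [hiff, ite_and]
        have h1 : ∀ v : Fin L → β, ∑ u : Fin L → α,
            (if u = (fun t => X (i*L + t.val)) then
              (if v = (fun t => Y (i*L + t.val)) then f u v else 0) else 0) =
            (if v = (fun t => Y (i*L + t.val)) then f (fun t => X (i*L + t.val)) v else 0) := by
          intro v
          rw [Finset.sum_ite_eq' Finset.univ (fun t => X (i*L + t.val))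
            (fun u => if v = (fun t => Y (i*L + t.val)) then f u v else 0)]
          simp
        simp only [h1]
        rw [Finset.sum_ite_eq' Finset.univ (fun t => Y (i*L + t.val))
          (fun v => f (fun t => X (i*L + t.val)) v)]
        simp

lemma condBlockEntropy_eq_T (X : ℕ → α) (Y : ℕ → β) (L k : ℕ) :
    condBlockEntropy X Y L k =
      -((∑ v : Fin L → β, ∑ u : Fin L → α, (blockCount X Y L k u v : ℝ) *
          Real.log ((blockCount X Y L k u v : ℝ) /
            ∑ u' : Fin L → α, (blockCount X Y L k u' v : ℝ))) /
        ((k:ℝ) * ((L:ℝ) * Real.log (Fintype.card α)))) := by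
  rw [condBlockEntropy]
  have h : ∑ v : Fin L → β, ∑ u : Fin L → α,
      ((blockCount X Y L k u v : ℝ)/k) * Real.log ((blockCount X Y L k u v : ℝ) /
        ∑ u' : Fin L → α, (blockCount X Y L k u' v : ℝ)) =
      (∑ v : Fin L → β, ∑ u : Fin L → α, (blockCount X Y L k u v : ℝ) *
        Real.log ((blockCount X Y L k u v : ℝ) /
          ∑ u' : Fin L → α, (blockCount X Y L k u' v : ℝ))) / k := by
    rw [Finset.sum_div]
    refine Finset.sum_congr rfl fun v _ => ?_
    rw [Finset.sum_div]
    refine Finset.sum_congr rfl fun u _ => ?_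
    ring
  rw [h]
  ring

lemma condBlockEntropy_nonneg (hα : 2 ≤ Fintype.card α) (X : ℕ → α) (Y : ℕ → β)
    (L k : ℕ) : 0 ≤ condBlockEntropy X Y L k := by
  have h2 : (2:ℝ) ≤ (Fintype.card α : ℝ) := by exact_mod_cast hα
  have hlogc : 0 < Real.log (Fintype.card α) := Real.log_pos (by linarith)
  rw [condBlockEntropy, neg_mul, neg_nonneg]
  apply mul_nonpos_iff.mpr
  left
  constructor
  · positivity
  · apply Finset.sum_nonpos
    intro v _
    apply Finset.sum_nonpos
    intro u _
    have hN : (0:ℝ) ≤ (blockCount X Y L k u v : ℝ) / k := by positivity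
    have hlog : Real.log ((blockCount X Y L k u v : ℝ) /
        ∑ u' : Fin L → α, (blockCount X Y L k u' v : ℝ)) ≤ 0 := by
      rcases Nat.eq_zero_or_pos (blockCount X Y L k u v) with h0 | h0
      · rw [h0]
        simp
      · have hNp : (0:ℝ) < (blockCount X Y L k u v : ℝ) := by exact_mod_cast h0
        have hM : (blockCount X Y L k u v : ℝ) ≤
            ∑ u' : Fin L → α, (blockCount X Y L k u' v : ℝ) :=
          Finset.single_le_sum (f := fun u' : Fin L → α => (blockCount X Y L k u' v : ℝ))
            (fun u' _ => Nat.cast_nonneg _) (Finset.mem_univ u)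
        apply Real.log_nonpos (by positivity)
        rw [div_le_one (by linarith)]
        exact hM
    exact mul_nonpos_iff.mpr (Or.inl ⟨hN, hlog⟩)

open Finset in
lemma condBlockEntropy_le_of_capital (hα : 2 ≤ Fintype.card α) (G : FSRG α β ℓ m) (s : ℝ)
    (Y : ℕ → β) (X : ℕ → α) (L k : ℕ) (hL : 0 < L) (hk : 0 < k)
    (hcap : 1 ≤ G.capital s Y X (k * L)) :
    condBlockEntropy X Y L k ≤
      s + Real.log ((m+1:ℝ) * (Fintype.card β : ℝ)^ℓ) /
        ((L:ℝ) * Real.log (Fintype.card α)) := by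
  classical
  have hcβ : 0 < Fintype.card β := @Fintype.card_pos β _ ⟨Y 0⟩
  have hcα : 0 < Fintype.card α := by omega
  have hc2 : (2:ℝ) ≤ (Fintype.card α : ℝ) := by exact_mod_cast hα
  have hc1 : (1:ℝ) < (Fintype.card α : ℝ) := by linarith
  have hc0 : (0:ℝ) < (Fintype.card α : ℝ) := by linarith
  have hlogc : 0 < Real.log (Fintype.card α) := Real.log_pos hc1
  set R : ℝ := (m+1:ℝ) * (Fintype.card β : ℝ)^ℓ with hRdef
  have hcβ' : (1:ℝ) ≤ (Fintype.card β : ℝ) := by exact_mod_cast hcβ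
  have h1m : (1:ℝ) ≤ (m+1:ℝ) := by
    have : (0:ℝ) ≤ (m:ℝ) := Nat.cast_nonneg m
    linarith
  have h2β : (1:ℝ) ≤ (Fintype.card β : ℝ)^ℓ := by
    calc (1:ℝ) = 1^ℓ := (one_pow ℓ).symm
      _ ≤ (Fintype.card β : ℝ)^ℓ := pow_le_pow_left₀ (by norm_num) hcβ' ℓ
  have hR1 : (1:ℝ) ≤ R := by rw [hRdef]; nlinarith
  have hR0 : (0:ℝ) < R := by linarith
  -- block data
  set U : ℕ → (Fin L → α) := fun i => fun t => X (i*L + t.val) with hU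
  set V : ℕ → (Fin L → β) := fun i => fun t => Y (i*L + t.val) with hV
  set E : ℕ → (Fin ℓ → β) := fun i => fun r => Y (i*L + L + r.val) with hE
  set glue : (Fin L → β) → (Fin ℓ → β) → (ℕ → β) := fun v e i =>
    if h : i < L then v ⟨i, h⟩ else if h' : i - L < ℓ then e ⟨i - L, h'⟩ else Y 0 with hglue
  set P : ℕ → ℝ := fun j => G.blockBet (G.run G.q₀ Y X (j*L))
    (fun i => Y (j*L + i)) (fun i => X (j*L + i)) L with hP
  set Qd : (Fin L → β) → (Fin L → α) → ℝ := fun v u =>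
    R⁻¹ * ∑ q : Fin (m+1), ∑ e : Fin ℓ → β,
      G.blockBet q (glue v e) (FSRG.ext (X 0) u) L with hQd
  have hQnn : ∀ v u, 0 ≤ Qd v u := by
    intro v u
    apply mul_nonneg (inv_nonneg.mpr hR0.le)
    exact Finset.sum_nonneg fun q _ => Finset.sum_nonneg fun e _ =>
      G.blockBet_nonneg _ _ _ _
  have hQsum : ∀ v, ∑ u : Fin L → α, Qd v u = 1 := by
    intro v
    simp only [hQd]
    rw [← Finset.mul_sum]
    have hs : ∑ u : Fin L → α, ∑ q : Fin (m+1), ∑ e : Fin ℓ → β,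
        G.blockBet q (glue v e) (FSRG.ext (X 0) u) L
        = ∑ q : Fin (m+1), ∑ e : Fin ℓ → β, ∑ u : Fin L → α,
          G.blockBet q (glue v e) (FSRG.ext (X 0) u) L := by
      rw [Finset.sum_comm]
      exact Finset.sum_congr rfl fun q _ => Finset.sum_comm
    rw [hs]
    simp only [G.sum_blockBet (X 0) L]
    rw [Finset.sum_const, Finset.sum_const, Finset.card_univ, Finset.card_univ,
      Fintype.card_fun, Fintype.card_fin, nsmul_eq_mul, nsmul_eq_mul, mul_one]
    rw [hRdef]
    push_cast
    field_simp
    simp only [Fintype.card_fin]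
  have hPeq : ∀ j, P j = G.blockBet (G.run G.q₀ Y X (j*L)) (glue (V j) (E j))
      (FSRG.ext (X 0) (U j)) L := by
    intro j
    simp only [hP]
    apply G.blockBet_congr
    · intro i hi
      simp only [hglue, hV, hE]
      by_cases h : i < L
      · rw [dif_pos h]
      · rw [dif_neg h, dif_pos (show i - L < ℓ by omega)]
        congr 1
        omega
    · intro i hi
      simp only [hU, FSRG.ext]
      rw [dif_pos hi]
  have hcapP : G.capital s Y X (k*L) =
      (Fintype.card α : ℝ) ^ (s * ((k*L : ℕ):ℝ)) * ∏ j ∈ Finset.range k, P j := by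
    rw [G.capital_eq_blockBet hcα, G.blockBet_blocks Y X L k]
  have ha : (0:ℝ) < (Fintype.card α : ℝ) ^ (s * ((k*L : ℕ):ℝ)) :=
    Real.rpow_pos_of_pos hc0 _
  have hBge : (Fintype.card α : ℝ) ^ (-(s * ((k*L : ℕ):ℝ))) ≤ ∏ j ∈ Finset.range k, P j := by
    rw [hcapP] at hcap
    rw [Real.rpow_neg hc0.le]
    have h := mul_le_mul_of_nonneg_left hcap (inv_nonneg.mpr ha.le)
    rw [mul_one, ← mul_assoc, inv_mul_cancel₀ ha.ne', one_mul] at h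
    exact h
  have hPnn : ∀ j, 0 ≤ P j := fun j => by
    simp only [hP]; exact G.blockBet_nonneg _ _ _ _
  have hprodpos : 0 < ∏ j ∈ Finset.range k, P j :=
    lt_of_lt_of_le (Real.rpow_pos_of_pos hc0 _) hBge
  have hPpos : ∀ j ∈ Finset.range k, 0 < P j := by
    intro j hj
    rcases (hPnn j).lt_or_eq with h | h
    · exact h
    · exact absurd (Finset.prod_eq_zero hj h.symm) (ne_of_gt hprodpos)
  have hPQ : ∀ j ∈ Finset.range k, P j ≤ R * Qd (V j) (U j) := by
    intro j hj
    rw [hPeq j]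
    have h1 : G.blockBet (G.run G.q₀ Y X (j*L)) (glue (V j) (E j))
        (FSRG.ext (X 0) (U j)) L ≤
        ∑ q : Fin (m+1), ∑ e : Fin ℓ → β,
          G.blockBet q (glue (V j) e) (FSRG.ext (X 0) (U j)) L := by
      calc G.blockBet (G.run G.q₀ Y X (j*L)) (glue (V j) (E j)) (FSRG.ext (X 0) (U j)) L
          ≤ ∑ e : Fin ℓ → β, G.blockBet (G.run G.q₀ Y X (j*L)) (glue (V j) e)
            (FSRG.ext (X 0) (U j)) L :=
            Finset.single_le_sum (fun e _ => G.blockBet_nonneg _ _ _ _)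
              (Finset.mem_univ (E j))
        _ ≤ _ :=
            Finset.single_le_sum (f := fun q => ∑ e : Fin ℓ → β,
              G.blockBet q (glue (V j) e) (FSRG.ext (X 0) (U j)) L)
              (fun q _ => Finset.sum_nonneg fun e _ => G.blockBet_nonneg _ _ _ _)
              (Finset.mem_univ _)
    have h2 : R * Qd (V j) (U j) = ∑ q : Fin (m+1), ∑ e : Fin ℓ → β,
        G.blockBet q (glue (V j) e) (FSRG.ext (X 0) (U j)) L := by
      simp only [hQd]
      rw [← mul_assoc, mul_inv_cancel₀ hR0.ne', one_mul]
    rw [h2]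
    exact h1
  have hQpos : ∀ j ∈ Finset.range k, 0 < Qd (V j) (U j) := by
    intro j hj
    by_contra h
    push_neg at h
    have h0 : Qd (V j) (U j) = 0 := le_antisymm h (hQnn _ _)
    have h3 := hPQ j hj
    rw [h0, mul_zero] at h3
    exact absurd h3 (not_le.mpr (hPpos j hj))
  have hlogsum : -(s * ((k*L : ℕ):ℝ)) * Real.log (Fintype.card α) ≤
      (k:ℝ) * Real.log R + ∑ j ∈ Finset.range k, Real.log (Qd (V j) (U j)) := by
    have h1 : Real.log ((Fintype.card α : ℝ) ^ (-(s * ((k*L : ℕ):ℝ)))) ≤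
        Real.log (∏ j ∈ Finset.range k, P j) :=
      Real.log_le_log (Real.rpow_pos_of_pos hc0 _) hBge
    rw [Real.log_rpow hc0] at h1
    rw [Real.log_prod (fun j hj => (hPpos j hj).ne')] at h1
    have h2 : ∑ j ∈ Finset.range k, Real.log (P j) ≤
        ∑ j ∈ Finset.range k, (Real.log R + Real.log (Qd (V j) (U j))) := by
      apply Finset.sum_le_sum
      intro j hj
      rw [← Real.log_mul hR0.ne' (hQpos j hj).ne']
      exact Real.log_le_log (hPpos j hj) (hPQ j hj)
    rw [Finset.sum_add_distrib, Finset.sum_const, Finset.card_range, nsmul_eq_mul] at h2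
    linarith
  have hgroup : ∑ j ∈ Finset.range k, Real.log (Qd (V j) (U j)) =
      ∑ v : Fin L → β, ∑ u : Fin L → α,
        (blockCount X Y L k u v : ℝ) * Real.log (Qd v u) := by
    have h := sum_blocks_eq (L := L) (k := k) X Y (fun u v => Real.log (Qd v u))
    simpa only [hU, hV] using h
  have hgibbs : ∑ v : Fin L → β, ∑ u : Fin L → α,
      (blockCount X Y L k u v : ℝ) * Real.log (Qd v u) ≤
      ∑ v : Fin L → β, ∑ u : Fin L → α, (blockCount X Y L k u v : ℝ) *
        Real.log ((blockCount X Y L k u v : ℝ) /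
          ∑ u' : Fin L → α, (blockCount X Y L k u' v : ℝ)) := by
    apply Finset.sum_le_sum
    intro v _
    apply gibbs_aux (fun u => (blockCount X Y L k u v : ℝ)) (fun u => Qd v u)
      (fun u => Nat.cast_nonneg _) (fun u => hQnn v u) (le_of_eq (hQsum v))
    intro u hNu
    have hcard : 0 < blockCount X Y L k u v := by exact_mod_cast hNu
    rw [blockCount] at hcard
    obtain ⟨i, hi⟩ := Finset.card_pos.mp hcard
    simp only [Finset.mem_filter, Finset.mem_range] at hi
    obtain ⟨hik, hXb, hYb⟩ := hi
    have hu : u = U i := by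
      simp only [hU]; exact funext fun t => (hXb t).symm
    have hv : v = V i := by
      simp only [hV]; exact funext fun t => (hYb t).symm
    rw [hu, hv]
    exact hQpos i (Finset.mem_range.mpr hik)
  set T : ℝ := ∑ v : Fin L → β, ∑ u : Fin L → α, (blockCount X Y L k u v : ℝ) *
    Real.log ((blockCount X Y L k u v : ℝ) /
      ∑ u' : Fin L → α, (blockCount X Y L k u' v : ℝ)) with hT
  have hmain : -(s * ((k*L : ℕ):ℝ)) * Real.log (Fintype.card α) ≤
      (k:ℝ) * Real.log R + T := by
    rw [hT]
    linarith [hlogsum, hgroup, hgibbs]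
  have hH : condBlockEntropy X Y L k =
      -(T / ((k:ℝ) * ((L:ℝ) * Real.log (Fintype.card α)))) := by
    rw [condBlockEntropy_eq_T, hT]
  have hk0 : (0:ℝ) < (k:ℝ) := by exact_mod_cast hk
  have hL0 : (0:ℝ) < (L:ℝ) := by exact_mod_cast hL
  have hD : (0:ℝ) < (k:ℝ) * ((L:ℝ) * Real.log (Fintype.card α)) := by positivity
  rw [hH, ← neg_div, div_le_iff₀ hD]
  have hexp : (s + Real.log R / ((L:ℝ) * Real.log (Fintype.card α))) *
      ((k:ℝ) * ((L:ℝ) * Real.log (Fintype.card α))) =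
      s * ((k*L : ℕ):ℝ) * Real.log (Fintype.card α) + (k:ℝ) * Real.log R := by
    push_cast
    field_simp
  rw [hexp]
  linarith [hmain]

lemma condBlockEntropy_le_one (hα : 2 ≤ Fintype.card α) (X : ℕ → α) (Y : ℕ → β)
    (L k : ℕ) (hL : 0 < L) : condBlockEntropy X Y L k ≤ 1 := by
  classical
  have hc2 : (2:ℝ) ≤ (Fintype.card α : ℝ) := by exact_mod_cast hα
  have hc1 : (1:ℝ) < (Fintype.card α : ℝ) := by linarith
  have hc0 : (0:ℝ) < (Fintype.card α : ℝ) := by linarith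
  have hlogc : 0 < Real.log (Fintype.card α) := Real.log_pos hc1
  have hL0 : (0:ℝ) < (L:ℝ) := by exact_mod_cast hL
  rcases Nat.eq_zero_or_pos k with rfl | hk
  · have h0 : ∀ (u : Fin L → α) (v : Fin L → β), blockCount X Y L 0 u v = 0 := by
      intro u v
      rw [blockCount]
      simp
    rw [condBlockEntropy]
    simp only [h0]
    norm_num
  · have hk0 : (0:ℝ) < (k:ℝ) := by exact_mod_cast hk
    set T : ℝ := ∑ v : Fin L → β, ∑ u : Fin L → α, (blockCount X Y L k u v : ℝ) *
      Real.log ((blockCount X Y L k u v : ℝ) /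
        ∑ u' : Fin L → α, (blockCount X Y L k u' v : ℝ)) with hT
    have hNk : ∑ v : Fin L → β, ∑ u : Fin L → α, (blockCount X Y L k u v : ℝ) = k := by
      have h := sum_blocks_eq (L := L) (k := k) X Y (fun _ _ => (1:ℝ))
      simp only [mul_one] at h
      rw [← h]
      simp
    have hunif : ∀ v : Fin L → β,
        ∑ u : Fin L → α, (blockCount X Y L k u v : ℝ) *
          Real.log (((Fintype.card α : ℝ)^L)⁻¹) ≤
        ∑ u : Fin L → α, (blockCount X Y L k u v : ℝ) *
          Real.log ((blockCount X Y L k u v : ℝ) /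
            ∑ u' : Fin L → α, (blockCount X Y L k u' v : ℝ)) := by
      intro v
      apply gibbs_aux (fun u => (blockCount X Y L k u v : ℝ))
        (fun _ => ((Fintype.card α : ℝ)^L)⁻¹) (fun u => Nat.cast_nonneg _)
        (fun _ => by positivity)
      · rw [Finset.sum_const, Finset.card_univ, Fintype.card_fun, Fintype.card_fin,
          nsmul_eq_mul]
        rw [Nat.cast_pow, mul_inv_cancel₀ (by positivity)]
      · intro u _
        positivity
    have hTge : -((k:ℝ) * ((L:ℝ) * Real.log (Fintype.card α))) ≤ T := by
      have h1 : ∑ v : Fin L → β, ∑ u : Fin L → α, (blockCount X Y L k u v : ℝ) *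
          Real.log (((Fintype.card α : ℝ)^L)⁻¹) ≤ T := by
        rw [hT]
        exact Finset.sum_le_sum fun v _ => hunif v
      have h2 : ∑ v : Fin L → β, ∑ u : Fin L → α, (blockCount X Y L k u v : ℝ) *
          Real.log (((Fintype.card α : ℝ)^L)⁻¹) =
          -((k:ℝ) * ((L:ℝ) * Real.log (Fintype.card α))) := by
        have hlv : Real.log (((Fintype.card α : ℝ)^L)⁻¹) =
            -((L:ℝ) * Real.log (Fintype.card α)) := by
          rw [Real.log_inv, Real.log_pow]
        simp only [hlv, ← Finset.sum_mul]
        rw [hNk]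
        ring
      linarith
    have hH := condBlockEntropy_eq_T X Y L k
    rw [hH, ← hT, ← neg_div, div_le_one (by positivity)]
    linarith

open Filter in
lemma relBlockEntropyAt_nonneg (hα : 2 ≤ Fintype.card α) (X : ℕ → α) (Y : ℕ → β)
    (L : ℕ) (hL : 0 < L) : 0 ≤ relBlockEntropyAt X Y L := by
  rw [relBlockEntropyAt]
  refine le_liminf_of_le ?_ ?_
  · exact (isBoundedUnder_of ⟨1, fun k => condBlockEntropy_le_one hα X Y L k hL⟩).isCoboundedUnder_ge
  · exact Eventually.of_forall fun k => condBlockEntropy_nonneg hα X Y L k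

open Filter in
lemma relBlockEntropyAt_le (hα : 2 ≤ Fintype.card α) (G : FSRG α β ℓ m) (s : ℝ)
    (hs : 0 ≤ s) (Y : ℕ → β) (X : ℕ → α) (hG : G.Succeeds s Y X) (L : ℕ) (hL : 0 < L) :
    relBlockEntropyAt X Y L ≤ s + Real.log ((m+1:ℝ) * (Fintype.card β : ℝ)^ℓ) /
      ((L:ℝ) * Real.log (Fintype.card α)) := by
  have hcα : 0 < Fintype.card α := by omega
  have hc2 : (2:ℝ) ≤ (Fintype.card α : ℝ) := by exact_mod_cast hα
  have hc0 : (0:ℝ) < (Fintype.card α : ℝ) := by linarith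
  rw [relBlockEntropyAt]
  refine liminf_le_of_frequently_le ?_
    (isBoundedUnder_of ⟨0, fun k => condBlockEntropy_nonneg hα X Y L k⟩)
  rw [Filter.frequently_atTop]
  intro K
  set K' := max K 1 with hK'
  have hcapnn : ∀ i, 0 ≤ G.capital s Y X i := fun i => G.capital_nonneg hcα s Y X i
  set C : ℝ := ∑ i ∈ Finset.range (K' * L + 1), G.capital s Y X i with hC
  have hC0 : 0 ≤ C := Finset.sum_nonneg fun i _ => hcapnn i
  have hCge : ∀ i ≤ K' * L, G.capital s Y X i ≤ C := fun i hi =>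
    Finset.single_le_sum (f := fun i => G.capital s Y X i)
      (fun j _ => hcapnn j) (Finset.mem_range.mpr (by omega))
  have hrpow1 : (1:ℝ) ≤ (Fintype.card α : ℝ) ^ (s * (L:ℝ)) := by
    calc (1:ℝ) = (Fintype.card α : ℝ) ^ (0:ℝ) := (Real.rpow_zero _).symm
      _ ≤ (Fintype.card α : ℝ) ^ (s * (L:ℝ)) :=
        Real.rpow_le_rpow_of_exponent_le (by linarith) (by positivity)
  obtain ⟨n, hn⟩ := hG ((Fintype.card α : ℝ) ^ (s * (L:ℝ)) * (C + 1))
  have hnK : K' * L < n := by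
    by_contra h
    push_neg at h
    have h1 := hCge n h
    nlinarith
  set k := n / L with hkdef
  have hkK : K' ≤ k := (Nat.le_div_iff_mul_le hL).mpr (by omega)
  have hkL_le : k * L ≤ n := Nat.div_mul_le_self n L
  have hmod : n - k * L < L := by
    have h1 : n % L < L := Nat.mod_lt n hL
    have h2 : k * L + n % L = n := by rw [hkdef]; exact Nat.div_add_mod' n L
    omega
  have hsplitn : k * L + (n - k * L) = n := by omega
  have h3 := G.capital_add_le hcα s Y X (k*L) (n - k*L)
  rw [hsplitn] at h3
  have h4 : (Fintype.card α : ℝ) ^ (s * ((n - k*L : ℕ):ℝ)) ≤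
      (Fintype.card α : ℝ) ^ (s * (L:ℝ)) := by
    apply Real.rpow_le_rpow_of_exponent_le (by linarith)
    have : ((n - k*L : ℕ):ℝ) ≤ (L:ℝ) := by exact_mod_cast hmod.le
    nlinarith
  have h5 : G.capital s Y X n ≤ G.capital s Y X (k*L) *
      (Fintype.card α : ℝ) ^ (s * (L:ℝ)) :=
    le_trans h3 (mul_le_mul_of_nonneg_left h4 (hcapnn _))
  have hfin : 1 ≤ G.capital s Y X (k * L) := by
    have hp : (0:ℝ) < (Fintype.card α : ℝ) ^ (s * (L:ℝ)) := Real.rpow_pos_of_pos hc0 _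
    nlinarith
  exact ⟨k, le_trans (le_max_left K 1) hkK,
    condBlockEntropy_le_of_capital hα G s Y X L k hL
      (by omega) hfin⟩

/-- The uniform gambler. -/
def unifFSRG (α β : Type) [Fintype α] [Fintype β] (hα : 0 < Fintype.card α) :
    FSRG α β 0 0 where
  δ := fun _ _ _ => 0
  bet := fun _ _ _ => (Fintype.card α : ℚ)⁻¹
  bet_nonneg := fun _ _ _ => by positivity
  bet_sum := fun _ _ => by
    rw [Finset.sum_const, Finset.card_univ, nsmul_eq_mul,
      mul_inv_cancel₀ (by exact_mod_cast hα.ne' : (Fintype.card α : ℚ) ≠ 0)]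
  q₀ := 0

lemma unifFSRG_succeeds (hα : 2 ≤ Fintype.card α) (Y : ℕ → β) (X : ℕ → α) :
    (unifFSRG α β (by omega)).Succeeds 2 Y X := by
  have hc2 : (2:ℝ) ≤ (Fintype.card α : ℝ) := by exact_mod_cast hα
  have hc0 : (0:ℝ) < (Fintype.card α : ℝ) := by linarith
  have hcap : ∀ n, (unifFSRG α β (by omega)).capital 2 Y X n = (Fintype.card α : ℝ)^n := by
    intro n
    induction n with
    | zero => rw [FSRG.capital, pow_zero]
    | succ n ih =>
        rw [FSRG.capital, ih]
        have hbet : (((unifFSRG α β (by omega : 0 < Fintype.card α)).bet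
            ((unifFSRG α β (by omega)).state Y X n) (fun j => Y (n + j.val)) (X n) : ℚ) : ℝ) =
            ((Fintype.card α : ℝ))⁻¹ := by
          show (((Fintype.card α : ℚ)⁻¹ : ℚ) : ℝ) = _
          push_cast
          rfl
        rw [hbet]
        have h2 : ((Fintype.card α : ℝ)) ^ (2:ℝ) = (Fintype.card α : ℝ)^(2:ℕ) := by
          rw [← Real.rpow_natCast (Fintype.card α : ℝ) 2]
          norm_num
        rw [h2]
        field_simp
        ring
  intro c
  obtain ⟨n, hn⟩ := pow_unbounded_of_one_lt c (show (1:ℝ) < (Fintype.card α : ℝ) by linarith)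
  exact ⟨n, by rw [hcap]; exact hn⟩
end Aux
/-- `H(X|Y) ≤ dim_FS^Y(X)`. -/
theorem relBlockEntropy_le_dimFSRel {α β : Type} [Fintype α] [Fintype β]
    (hα : 2 ≤ Fintype.card α) (X : ℕ → α) (Y : ℕ → β) :
    relBlockEntropy X Y ≤ dimFSRel X Y := by
  have hc2 : (2:ℝ) ≤ (Fintype.card α : ℝ) := by exact_mod_cast hα
  have hc1 : (1:ℝ) < (Fintype.card α : ℝ) := by linarith
  have hlogc : 0 < Real.log (Fintype.card α) := Real.log_pos hc1
  have hcβ : 0 < Fintype.card β := @Fintype.card_pos β _ ⟨Y 0⟩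
  have hcβ' : (1:ℝ) ≤ (Fintype.card β : ℝ) := by exact_mod_cast hcβ
  rw [dimFSRel]
  apply le_csInf
  · exact ⟨2, by norm_num, 0, 0, unifFSRG α β (by omega), unifFSRG_succeeds hα Y X⟩
  rintro s ⟨hs0, ℓ, m, G, hG⟩
  refine le_of_forall_pos_le_add fun ε hε => ?_
  set C0 : ℝ := Real.log ((m+1:ℝ) * (Fintype.card β : ℝ)^ℓ) / Real.log (Fintype.card α)
    with hC0def
  have hR1 : (1:ℝ) ≤ (m+1:ℝ) * (Fintype.card β : ℝ)^ℓ := by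
    have h1 : (0:ℝ) ≤ (m:ℝ) := Nat.cast_nonneg m
    have h2 : (1:ℝ) ≤ (Fintype.card β : ℝ)^ℓ := by
      calc (1:ℝ) = 1^ℓ := (one_pow ℓ).symm
        _ ≤ (Fintype.card β : ℝ)^ℓ := pow_le_pow_left₀ (by norm_num) hcβ' ℓ
    nlinarith
  have hC0 : 0 ≤ C0 := div_nonneg (Real.log_nonneg hR1) hlogc.le
  obtain ⟨n, hn⟩ := exists_nat_ge (C0 / ε)
  have hbdd : BddBelow (Set.range fun ℓ' : ℕ => relBlockEntropyAt X Y (ℓ'+1)) := by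
    refine ⟨0, ?_⟩
    rintro x ⟨j, rfl⟩
    exact relBlockEntropyAt_nonneg hα X Y (j+1) (Nat.succ_pos j)
  have hstep := relBlockEntropyAt_le hα G s hs0 Y X hG (n+1) (Nat.succ_pos n)
  calc relBlockEntropy X Y ≤ relBlockEntropyAt X Y (n+1) := ciInf_le hbdd n
    _ ≤ s + Real.log ((m+1:ℝ) * (Fintype.card β : ℝ)^ℓ) /
        (((n+1 : ℕ):ℝ) * Real.log (Fintype.card α)) := hstep
    _ ≤ s + ε := by
        have hn1 : (0:ℝ) < ((n+1 : ℕ):ℝ) := by positivity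
        have heq : Real.log ((m+1:ℝ) * (Fintype.card β : ℝ)^ℓ) /
            (((n+1 : ℕ):ℝ) * Real.log (Fintype.card α)) = C0 / ((n+1 : ℕ):ℝ) := by
          rw [hC0def, div_div, mul_comm ((n+1 : ℕ):ℝ) (Real.log (Fintype.card α))]
        rw [heq]
        have hC0n : C0 ≤ ((n+1 : ℕ):ℝ) * ε := by
          have h1 : C0 ≤ (n:ℝ) * ε := by
            rw [div_le_iff₀ hε] at hn
            linarith [hn]
          have h2 : (n:ℝ) * ε ≤ ((n+1:ℕ):ℝ) * ε := by
            have : (n:ℝ) ≤ ((n+1:ℕ):ℝ) := by push_cast; linarith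
            nlinarith
          linarith
        have hdc : C0 / ((n+1 : ℕ):ℝ) ≤ ε := by
          rw [div_le_iff₀ hn1]
          linarith [hC0n]
        linarith [hdc]
end

section
/- Let Σ₁, Σ₂ be finite alphabets with |Σ₁| ≥ 2, let ℓ ≥ 1, and set Ω = Σ₁^ℓ × Σ₂^ℓ. Let ε > 0 and let Q be a probability distribution on Ω with Q(x,y) ≥ ε for all (x,y) ∈ Ω. Then for every probability distribution P on Ω with max_{(x,y)∈Ω} |P(x,y) − Q(x,y)| < 2|Ω|ε, one has (1/(ℓ log|Σ₁|)) Σ_{y∈Σ₂^ℓ} Σ_{x∈Σ₁^ℓ} P(x,y)·[log P(x|y) − log Q(x|y)] < 2|Ω|⁴ε, where the sum is over pairs with P(x,y) ≠ 0. -/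
open Real

lemma aux_sinh_bound (p q : ℝ) (hq : 0 < q) (hpq : q ≤ p) :
    p * (Real.log p - Real.log q) ≤ (p - q) + (p - q)^2 / (2*q) := by
  have hp : 0 < p := lt_of_lt_of_le hq hpq
  rcases eq_or_lt_of_le hpq with rfl | hlt
  · simp
  · have ht : 1 < p / q := (one_lt_div hq).mpr hlt
    have hlog : Real.log p - Real.log q = Real.log (p / q) :=
      (Real.log_div hp.ne' hq.ne').symm
    have hpos : 0 < Real.log (p / q) := Real.log_pos ht
    have hsinh : Real.log (p / q) < Real.sinh (Real.log (p / q)) :=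
      Real.self_lt_sinh_iff.mpr hpos
    have hval : Real.sinh (Real.log (p / q)) = (p/q - q/p) / 2 := by
      rw [Real.sinh_eq, Real.exp_log (div_pos hp hq), Real.exp_neg,
        Real.exp_log (div_pos hp hq)]
      rw [inv_div]
    have h1 : p * (Real.log p - Real.log q) ≤ p * ((p/q - q/p)/2) := by
      rw [hlog]
      apply mul_le_mul_of_nonneg_left _ hp.le
      rw [← hval]; exact hsinh.le
    have h2 : p * ((p/q - q/p)/2) = (p - q) + (p - q)^2 / (2*q) := by
      field_simp
      ring
    linarith

lemma aux_marg (a b : ℝ) (ha : 0 ≤ a) (hb : 0 < b) :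
    a * (Real.log b - Real.log a) ≤ b - a := by
  rcases eq_or_lt_of_le ha with rfl | ha'
  · simpa using hb.le
  · have h1 : Real.log b - Real.log a = Real.log (b / a) :=
      (Real.log_div hb.ne' ha'.ne').symm
    have h2 : Real.log (b / a) ≤ b / a - 1 :=
      Real.log_le_sub_one_of_pos (div_pos hb ha')
    have h3 : a * (b / a - 1) = b - a := by field_simp
    calc a * (Real.log b - Real.log a) = a * Real.log (b / a) := by rw [h1]
      _ ≤ a * (b / a - 1) := mul_le_mul_of_nonneg_left h2 ha'.le
      _ = b - a := h3

lemma key_pt (δ p q : ℝ) (hp : 0 ≤ p) (hq : 0 < q) (h : |p - q| ≤ δ) :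
    p * (Real.log p - Real.log q) ≤ (p - q) + (p - q)^2 / (2*q) + δ/2 := by
  have hd := abs_le.mp h
  have hδ0 : 0 ≤ δ := le_trans (abs_nonneg _) h
  rcases le_or_gt q p with h1 | h1
  · linarith [aux_sinh_bound p q hq h1]
  · rcases eq_or_lt_of_le hp with rfl | hp'
    · have : ((0:ℝ) - q)^2 / (2*q) = q/2 := by field_simp; ring
      rw [this]
      simp only [zero_mul]
      have : q ≤ δ := by
        have := abs_le.mp h
        linarith [this.1]
      linarith
    · have hlog : Real.log p - Real.log q ≤ p / q - 1 := by
        rw [← Real.log_div hp'.ne' hq.ne']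
        exact Real.log_le_sub_one_of_pos (div_pos hp' hq)
      have h2 : p * (Real.log p - Real.log q) ≤ p * (p / q - 1) :=
        mul_le_mul_of_nonneg_left hlog hp
      have h3 : p * (p / q - 1) = (p - q) + (p - q)^2 / q := by
        field_simp; ring
      have h4 : (p - q)^2 ≤ δ * q := by nlinarith
      have h5 : (p - q)^2 / q - (p - q)^2/(2*q) = (p-q)^2/(2*q) := by
        field_simp; ring
      have h6 : (p-q)^2/(2*q) ≤ δ/2 := by
        rw [div_le_div_iff₀ (by linarith) (by norm_num)]
        linarith
      linarith

lemma arith_bound (n : ℝ) (hn : 2 ≤ n) : 2*n^3 + n^2 < 2 * n^4 * Real.log 2 := by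
  have hL := Real.log_two_gt_d9
  have hn0 : 0 ≤ n - 2 := by linarith
  have hA : 0 ≤ (n*n) * ((n-2)*(n-2)) := by positivity
  have hB : 0 ≤ (n - 2) * (n*n) := by positivity
  have hC : 0 ≤ n * n := by positivity
  have key : 2*n^3 + n^2 < 2 * n^4 * 0.6931471803 := by nlinarith [sq_nonneg (n-2)]
  have hn4 : (0:ℝ) < n^4 := by positivity
  nlinarith

/-- if `Q` is a probability distribution on `Ω = Σ₁^ℓ × Σ₂^ℓ` bounded below by
`ε` and `P` is any probability distribution with `max |P − Q| < 2|Ω|ε`, then the normalized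
sum of `P(x,y)·[log P(x|y) − log Q(x|y)]` is below `2|Ω|⁴ε`.  (Terms with `P(x,y) = 0` vanish
since they are multiplied by `P(x,y)`.) -/
theorem kl_cond_divergence_small {α β : Type} [Fintype α] [Fintype β]
    (hα : 2 ≤ Fintype.card α) (hβ : 1 ≤ Fintype.card β)
    (ℓ : ℕ) (hℓ : 1 ≤ ℓ) (ε : ℝ) (hε : 0 < ε)
    (Q : (Fin ℓ → α) × (Fin ℓ → β) → ℝ)
    (hQsum : ∑ ω, Q ω = 1) (hQε : ∀ ω, ε ≤ Q ω)
    (P : (Fin ℓ → α) × (Fin ℓ → β) → ℝ)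
    (hP0 : ∀ ω, 0 ≤ P ω) (hP1 : ∀ ω, P ω ≤ 1) (hPsum : ∑ ω, P ω = 1)
    (hclose : ∀ ω, |P ω - Q ω| <
      2 * (Fintype.card ((Fin ℓ → α) × (Fin ℓ → β)) : ℝ) * ε) :
    (1 / (ℓ * Real.log (Fintype.card α))) *
        ∑ y : Fin ℓ → β, ∑ x : Fin ℓ → α,
          P (x, y) * (Real.log (P (x, y) / ∑ x' : Fin ℓ → α, P (x', y)) -
            Real.log (Q (x, y) / ∑ x' : Fin ℓ → α, Q (x', y))) <
      2 * (Fintype.card ((Fin ℓ → α) × (Fin ℓ → β)) : ℝ) ^ 4 * ε := by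
  classical
  haveI : Nonempty α := Fintype.card_pos_iff.mp (by omega)
  haveI : Nonempty β := Fintype.card_pos_iff.mp (by omega)
  set n : ℝ := (Fintype.card ((Fin ℓ → α) × (Fin ℓ → β)) : ℝ) with hn
  -- basic facts
  have hcard : Fintype.card ((Fin ℓ → α) × (Fin ℓ → β))
      = Fintype.card α ^ ℓ * Fintype.card β ^ ℓ := by
    simp [Fintype.card_prod, Fintype.card_fun]
  have hcard2 : 2 ≤ Fintype.card ((Fin ℓ → α) × (Fin ℓ → β)) := by
    rw [hcard]
    have h1 : 2 ≤ Fintype.card α ^ ℓ := by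
      calc 2 = 2 ^ 1 := by norm_num
        _ ≤ Fintype.card α ^ 1 := by exact Nat.pow_le_pow_left hα 1
        _ ≤ Fintype.card α ^ ℓ := Nat.pow_le_pow_right (by omega) hℓ
    have h2 : 1 ≤ Fintype.card β ^ ℓ := Nat.one_le_pow _ _ (by omega)
    calc 2 = 2 * 1 := by norm_num
      _ ≤ Fintype.card α ^ ℓ * Fintype.card β ^ ℓ := Nat.mul_le_mul h1 h2
  have hn2 : (2:ℝ) ≤ n := by rw [hn]; exact_mod_cast hcard2
  have hn0 : (0:ℝ) < n := by linarith
  have hQpos : ∀ ω, 0 < Q ω := fun ω => lt_of_lt_of_le hε (hQε ω)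
  have hQYpos : ∀ y : Fin ℓ → β, 0 < ∑ x' : Fin ℓ → α, Q (x', y) := by
    intro y
    exact Finset.sum_pos (fun x _ => hQpos (x, y)) Finset.univ_nonempty
  have hPYnn : ∀ y : Fin ℓ → β, 0 ≤ ∑ x' : Fin ℓ → α, P (x', y) := by
    intro y
    exact Finset.sum_nonneg (fun x _ => hP0 (x, y))
  -- the constant
  set C : ℝ := 2*n^2*ε + n*ε with hC
  -- key pointwise bound
  have key : ∀ (y : Fin ℓ → β) (x : Fin ℓ → α),
      P (x, y) * (Real.log (P (x, y) / ∑ x' : Fin ℓ → α, P (x', y)) -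
        Real.log (Q (x, y) / ∑ x' : Fin ℓ → α, Q (x', y)))
      ≤ (P (x, y) - Q (x, y)) + C +
        P (x, y) * (Real.log (∑ x' : Fin ℓ → α, Q (x', y)) -
          Real.log (∑ x' : Fin ℓ → α, P (x', y))) := by
    intro y x
    have hqb : |P (x,y) - Q (x,y)| ≤ 2*n*ε := (hclose (x, y)).le
    by_cases hP : P (x, y) = 0
    · rw [hP]
      simp only [zero_mul, zero_sub, zero_add]
      have hq : Q (x, y) ≤ 2*n*ε := by
        have h := (abs_le.mp hqb).1
        rw [hP] at h
        linarith
      have h1 : 0 ≤ (n - 1) * n * ε :=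
        mul_nonneg (mul_nonneg (by linarith) (by linarith)) hε.le
      have h2 : 0 ≤ n * ε := mul_nonneg (by linarith) hε.le
      have : 2*n*ε ≤ C := by rw [hC]; nlinarith
      linarith
    · have hPxy : 0 < P (x, y) := lt_of_le_of_ne (hP0 _) (Ne.symm hP)
      have hPY : 0 < ∑ x' : Fin ℓ → α, P (x', y) :=
        lt_of_lt_of_le hPxy
          (Finset.single_le_sum (fun x' _ => hP0 (x', y)) (Finset.mem_univ x))
      rw [Real.log_div hP hPY.ne', Real.log_div (hQpos (x,y)).ne' (hQYpos y).ne']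
      have hkp := key_pt (2*n*ε) (P (x,y)) (Q (x,y)) (hP0 _) (hQpos _) hqb
      have hsq : (P (x,y) - Q (x,y))^2 / (2 * Q (x,y)) ≤ 2*n^2*ε := by
        have h1 : (P (x,y) - Q (x,y))^2 ≤ (2*n*ε)^2 := by
          have := abs_le.mp hqb
          nlinarith [this.1, this.2]
        have h2 : (P (x,y) - Q (x,y))^2 / (2 * Q (x,y)) ≤ (2*n*ε)^2 / (2*ε) := by
          apply div_le_div₀ (by positivity) h1 (by linarith)
          linarith [hQε (x,y)]
        have h3 : (2*n*ε)^2 / (2*ε) = 2*n^2*ε := by field_simp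
        linarith
      have expand : P (x,y) * (Real.log (P (x,y)) - Real.log (∑ x' : Fin ℓ → α, P (x', y)) -
          (Real.log (Q (x,y)) - Real.log (∑ x' : Fin ℓ → α, Q (x', y))))
          = P (x,y) * (Real.log (P (x,y)) - Real.log (Q (x,y))) +
            P (x,y) * (Real.log (∑ x' : Fin ℓ → α, Q (x', y)) -
              Real.log (∑ x' : Fin ℓ → α, P (x', y))) := by ring
      rw [expand, hC]
      have : n*ε = (2*n*ε)/2 := by ring
      nlinarith [hkp, hsq]
  -- marginal bound
  have marg : ∀ y : Fin ℓ → β,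
      (∑ x' : Fin ℓ → α, P (x', y)) * (Real.log (∑ x' : Fin ℓ → α, Q (x', y)) -
        Real.log (∑ x' : Fin ℓ → α, P (x', y)))
      ≤ (∑ x' : Fin ℓ → α, Q (x', y)) - (∑ x' : Fin ℓ → α, P (x', y)) :=
    fun y => aux_marg _ _ (hPYnn y) (hQYpos y)
  have hS : (∑ y : Fin ℓ → β, ∑ x : Fin ℓ → α,
          P (x, y) * (Real.log (P (x, y) / ∑ x' : Fin ℓ → α, P (x', y)) -
            Real.log (Q (x, y) / ∑ x' : Fin ℓ → α, Q (x', y))))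
      ≤ 2*n^3*ε + n^2*ε := by
    have step1 : ∀ y : Fin ℓ → β,
        (∑ x : Fin ℓ → α,
          P (x, y) * (Real.log (P (x, y) / ∑ x' : Fin ℓ → α, P (x', y)) -
            Real.log (Q (x, y) / ∑ x' : Fin ℓ → α, Q (x', y))))
        ≤ (∑ x : Fin ℓ → α, ((P (x, y) - Q (x, y)) + C)) +
          (∑ x' : Fin ℓ → α, P (x', y)) *
            (Real.log (∑ x' : Fin ℓ → α, Q (x', y)) -
              Real.log (∑ x' : Fin ℓ → α, P (x', y))) := by
      intro y
      calc (∑ x : Fin ℓ → α,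
          P (x, y) * (Real.log (P (x, y) / ∑ x' : Fin ℓ → α, P (x', y)) -
            Real.log (Q (x, y) / ∑ x' : Fin ℓ → α, Q (x', y))))
          ≤ ∑ x : Fin ℓ → α, ((P (x, y) - Q (x, y)) + C +
              P (x, y) * (Real.log (∑ x' : Fin ℓ → α, Q (x', y)) -
                Real.log (∑ x' : Fin ℓ → α, P (x', y)))) :=
            Finset.sum_le_sum (fun x _ => key y x)
        _ = (∑ x : Fin ℓ → α, ((P (x, y) - Q (x, y)) + C)) +
            ∑ x : Fin ℓ → α, P (x, y) *
              (Real.log (∑ x' : Fin ℓ → α, Q (x', y)) -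
                Real.log (∑ x' : Fin ℓ → α, P (x', y))) :=
            Finset.sum_add_distrib
        _ = (∑ x : Fin ℓ → α, ((P (x, y) - Q (x, y)) + C)) +
            (∑ x' : Fin ℓ → α, P (x', y)) *
              (Real.log (∑ x' : Fin ℓ → α, Q (x', y)) -
                Real.log (∑ x' : Fin ℓ → α, P (x', y))) := by
            rw [← Finset.sum_mul]
    have e1 : (∑ y : Fin ℓ → β, ∑ x : Fin ℓ → α, ((P (x, y) - Q (x, y)) + C))
        = n * C := by
      rw [← Fintype.sum_prod_type_right (f := fun ω => P ω - Q ω + C)]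
      rw [Finset.sum_add_distrib, Finset.sum_sub_distrib, hPsum, hQsum,
        Finset.sum_const, Finset.card_univ, nsmul_eq_mul, hn]
      ring
    have e2 : (∑ y : Fin ℓ → β,
        ((∑ x' : Fin ℓ → α, Q (x', y)) - (∑ x' : Fin ℓ → α, P (x', y)))) = 0 := by
      rw [Finset.sum_sub_distrib,
        ← Fintype.sum_prod_type_right (f := Q),
        ← Fintype.sum_prod_type_right (f := P), hQsum, hPsum]
      ring
    calc (∑ y : Fin ℓ → β, ∑ x : Fin ℓ → α,
          P (x, y) * (Real.log (P (x, y) / ∑ x' : Fin ℓ → α, P (x', y)) -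
            Real.log (Q (x, y) / ∑ x' : Fin ℓ → α, Q (x', y))))
        ≤ ∑ y : Fin ℓ → β,
            ((∑ x : Fin ℓ → α, ((P (x, y) - Q (x, y)) + C)) +
              (∑ x' : Fin ℓ → α, P (x', y)) *
                (Real.log (∑ x' : Fin ℓ → α, Q (x', y)) -
                  Real.log (∑ x' : Fin ℓ → α, P (x', y)))) :=
          Finset.sum_le_sum (fun y _ => step1 y)
      _ ≤ ∑ y : Fin ℓ → β,
            ((∑ x : Fin ℓ → α, ((P (x, y) - Q (x, y)) + C)) +
              ((∑ x' : Fin ℓ → α, Q (x', y)) - (∑ x' : Fin ℓ → α, P (x', y)))) :=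
          Finset.sum_le_sum (fun y _ => by linarith [marg y])
      _ = (∑ y : Fin ℓ → β, ∑ x : Fin ℓ → α, ((P (x, y) - Q (x, y)) + C)) +
          (∑ y : Fin ℓ → β,
            ((∑ x' : Fin ℓ → α, Q (x', y)) - (∑ x' : Fin ℓ → α, P (x', y)))) :=
          Finset.sum_add_distrib
      _ = n * C + 0 := by rw [e1, e2]
      _ = 2*n^3*ε + n^2*ε := by rw [hC]; ring
  -- final arithmetic
  have hcα : (2:ℝ) ≤ (Fintype.card α : ℝ) := by exact_mod_cast hα
  have hlogpos : 0 < Real.log (Fintype.card α) := Real.log_pos (by linarith)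
  have hlog2 : Real.log 2 ≤ Real.log (Fintype.card α) :=
    Real.log_le_log (by norm_num) hcα
  have hℓ1 : (1:ℝ) ≤ (ℓ:ℝ) := by exact_mod_cast hℓ
  have hLpos : 0 < (ℓ:ℝ) * Real.log (Fintype.card α) :=
    mul_pos (by linarith) hlogpos
  have hL2 : Real.log 2 ≤ (ℓ:ℝ) * Real.log (Fintype.card α) := by
    calc Real.log 2 ≤ Real.log (Fintype.card α) := hlog2
      _ = 1 * Real.log (Fintype.card α) := by ring
      _ ≤ (ℓ:ℝ) * Real.log (Fintype.card α) :=
          mul_le_mul_of_nonneg_right hℓ1 hlogpos.le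
  have harith := arith_bound n hn2
  have h3 : 2*n^3 + n^2 < 2*n^4 * ((ℓ:ℝ) * Real.log (Fintype.card α)) := by
    calc 2*n^3 + n^2 < 2*n^4 * Real.log 2 := harith
      _ ≤ 2*n^4 * ((ℓ:ℝ) * Real.log (Fintype.card α)) := by
          apply mul_le_mul_of_nonneg_left hL2
          positivity
  calc (1 / ((ℓ:ℝ) * Real.log (Fintype.card α))) *
        ∑ y : Fin ℓ → β, ∑ x : Fin ℓ → α,
          P (x, y) * (Real.log (P (x, y) / ∑ x' : Fin ℓ → α, P (x', y)) -
            Real.log (Q (x, y) / ∑ x' : Fin ℓ → α, Q (x', y)))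
      ≤ (1 / ((ℓ:ℝ) * Real.log (Fintype.card α))) * (2*n^3*ε + n^2*ε) :=
        mul_le_mul_of_nonneg_left hS (by positivity)
    _ < 2 * n^4 * ε := by
        rw [one_div_mul_eq_div, div_lt_iff₀ hLpos]
        nlinarith [mul_lt_mul_of_pos_right h3 hε]
end

section
/- Let Y₀, Y₁, …, Y_{n−1} be infinite sequences over a finite alphabet Σ with |Σ| ≥ 2, and let σ be any permutation of {0,1,…,n−1}. Then dim_FS(Y₀ × Y₁ × ⋯ × Y_{n−1}) = dim_FS(Y_{σ(0)} × Y_{σ(1)} × ⋯ × Y_{σ(n−1)}) = dim_FS(Y_{σ(0)} ⊕ Y_{σ(1)} ⊕ ⋯ ⊕ Y_{σ(n−1)}) = dim_FS(Y₀ ⊕ Y₁ ⊕ ⋯ ⊕ Y_{n−1}). -/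
open Filter

section Aux

namespace FSG

variable {α : Type} [Fintype α] {m : ℕ}

lemma bet_le_one (G : FSG α m) (q : Fin (m+1)) (a : α) : G.bet q a ≤ 1 := by
  have h := G.bet_sum q
  calc G.bet q a ≤ ∑ b, G.bet q b :=
        Finset.single_le_sum (fun b _ => G.bet_nonneg q b) (Finset.mem_univ a)
    _ = 1 := h

lemma capital_nonneg (G : FSG α m) (s : ℝ) (X : ℕ → α) (k : ℕ) : 0 ≤ G.capital s X k := by
  induction k with
  | zero => simp [capital]
  | succ k ih =>
    rw [capital]
    have h1 : (0:ℝ) ≤ (Fintype.card α : ℝ) ^ s := Real.rpow_nonneg (by positivity) s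
    have h2 : (0:ℝ) ≤ (G.bet (G.state X k) (X k) : ℝ) := by exact_mod_cast G.bet_nonneg _ _
    exact mul_nonneg (mul_nonneg h1 h2) ih

lemma one_le_rpow_card (hcard : 1 ≤ Fintype.card α) {s : ℝ} (hs : 0 ≤ s) :
    (1:ℝ) ≤ (Fintype.card α : ℝ) ^ s := by
  have hc : (1:ℝ) ≤ (Fintype.card α : ℝ) := by exact_mod_cast hcard
  calc (1:ℝ) = (Fintype.card α : ℝ) ^ (0:ℝ) := (Real.rpow_zero _).symm
    _ ≤ (Fintype.card α : ℝ) ^ s := Real.rpow_le_rpow_of_exponent_le hc hs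

lemma capital_le_block (G : FSG α m) {s : ℝ} (hs : 0 ≤ s) (hcard : 1 ≤ Fintype.card α)
    (X : ℕ → α) (p j : ℕ) :
    G.capital s X (p + j) ≤ ((Fintype.card α : ℝ) ^ s) ^ j * G.capital s X p := by
  induction j with
  | zero => simp
  | succ j ih =>
    have hc1 : (1:ℝ) ≤ (Fintype.card α : ℝ) ^ s := one_le_rpow_card hcard hs
    have hc0 : (0:ℝ) ≤ (Fintype.card α : ℝ) ^ s := by linarith
    rw [show p + (j+1) = (p+j) + 1 from rfl, capital]
    have hb : (G.bet (G.state X (p+j)) (X (p+j)) : ℝ) ≤ 1 := by exact_mod_cast G.bet_le_one _ _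
    have hb0 : (0:ℝ) ≤ (G.bet (G.state X (p+j)) (X (p+j)) : ℝ) := by
      exact_mod_cast G.bet_nonneg _ _
    have hcap0 := G.capital_nonneg s X (p+j)
    calc (Fintype.card α : ℝ) ^ s * (G.bet (G.state X (p+j)) (X (p+j)) : ℝ) * G.capital s X (p+j)
        ≤ (Fintype.card α : ℝ) ^ s * 1 * G.capital s X (p+j) := by
          apply mul_le_mul_of_nonneg_right _ hcap0
          exact mul_le_mul_of_nonneg_left hb hc0
      _ = (Fintype.card α : ℝ) ^ s * G.capital s X (p+j) := by ring
      _ ≤ (Fintype.card α : ℝ) ^ s * (((Fintype.card α : ℝ) ^ s) ^ j * G.capital s X p) :=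
          mul_le_mul_of_nonneg_left ih hc0
      _ = ((Fintype.card α : ℝ) ^ s) ^ (j+1) * G.capital s X p := by ring

lemma capital_block (G : FSG α m) (s : ℝ) (X : ℕ → α) (p L : ℕ) :
    G.capital s X (p + L) =
      (∏ j : Fin L, (Fintype.card α : ℝ) ^ s * (G.bet (G.state X (p + j)) (X (p + j)) : ℝ)) *
        G.capital s X p := by
  induction L with
  | zero => simp
  | succ L ih =>
    rw [show p + (L+1) = (p+L)+1 from rfl, capital, ih, Fin.prod_univ_castSucc]
    simp only [Fin.coe_castSucc, Fin.val_last]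
    ring

end FSG

end Aux
namespace FSG

variable {α : Type} [Fintype α] {m : ℕ}

def runB (G : FSG α m) : Fin (m+1) → List α → Fin (m+1)
  | q, [] => q
  | q, x :: l => G.runB (G.δ q x) l

def betB (G : FSG α m) : Fin (m+1) → List α → ℚ
  | _, [] => 1
  | q, x :: l => G.bet q x * G.betB (G.δ q x) l

lemma betB_nonneg (G : FSG α m) : ∀ (l : List α) (q : Fin (m+1)), 0 ≤ G.betB q l := by
  intro l
  induction l with
  | nil => intro q; simp [betB]
  | cons x l ih =>
    intro q
    exact mul_nonneg (G.bet_nonneg q x) (ih (G.δ q x))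

lemma betB_sum (G : FSG α m) : ∀ (k : ℕ) (q : Fin (m+1)),
    ∑ a : Fin k → α, G.betB q (List.ofFn a) = 1 := by
  intro k
  induction k with
  | zero =>
    intro q
    simp [betB, List.ofFn_zero]
  | succ k ih =>
    intro q
    rw [← Equiv.sum_comp (Fin.consEquiv (fun _ : Fin (k+1) => α)) fun a => G.betB q (List.ofFn a)]
    rw [Fintype.sum_prod_type]
    have key : ∀ (x : α) (a : Fin k → α),
        G.betB q (List.ofFn ((Fin.consEquiv (fun _ : Fin (k+1) => α)) (x, a))) =
          G.bet q x * G.betB (G.δ q x) (List.ofFn a) := by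
      intro x a
      have h1 : (Fin.consEquiv (fun _ : Fin (k+1) => α)) (x, a) = Fin.cons x a := rfl
      rw [h1, List.ofFn_succ]
      simp [betB, Fin.cons_zero, Fin.cons_succ]
    simp_rw [key, ← Finset.mul_sum, ih, mul_one]
    exact G.bet_sum q

lemma runB_state (G : FSG α m) (X : ℕ → α) : ∀ (L p : ℕ),
    G.runB (G.state X p) (List.ofFn fun j : Fin L => X (p + (j:ℕ))) = G.state X (p + L) := by
  intro L
  induction L with
  | zero => intro p; simp [runB]
  | succ L ih =>
    intro p
    rw [List.ofFn_succ]
    show G.runB (G.δ (G.state X p) (X (p + ((0 : Fin (L+1)) : ℕ)))) _ = _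
    have h0 : p + ((0 : Fin (L+1)) : ℕ) = p := by simp
    have h1 : G.δ (G.state X p) (X p) = G.state X (p+1) := rfl
    have h2 : (fun j : Fin L => X (p + ((Fin.succ j : Fin (L+1)) : ℕ))) =
        fun j : Fin L => X ((p+1) + (j:ℕ)) := by
      funext j
      congr 1
      simp [Fin.val_succ]
      omega
    rw [h0, h1, h2, ih (p+1)]
    congr 1
    omega

lemma betB_state (G : FSG α m) (X : ℕ → α) : ∀ (L p : ℕ),
    G.betB (G.state X p) (List.ofFn fun j : Fin L => X (p + (j:ℕ))) =
      ∏ j : Fin L, G.bet (G.state X (p + (j:ℕ))) (X (p + (j:ℕ))) := by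
  intro L
  induction L with
  | zero => intro p; simp [betB]
  | succ L ih =>
    intro p
    rw [List.ofFn_succ, Fin.prod_univ_succ]
    show G.bet (G.state X p) (X (p + ((0 : Fin (L+1)) : ℕ))) *
        G.betB (G.δ (G.state X p) (X (p + ((0 : Fin (L+1)) : ℕ)))) _ = _
    have h0 : p + ((0 : Fin (L+1)) : ℕ) = p := by simp
    have h1 : G.δ (G.state X p) (X p) = G.state X (p+1) := rfl
    have h2 : (fun j : Fin L => X (p + ((Fin.succ j : Fin (L+1)) : ℕ))) =
        fun j : Fin L => X ((p+1) + (j:ℕ)) := by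
      funext j; congr 1; simp [Fin.val_succ]; omega
    rw [h0, h1, h2, ih (p+1)]
    congr 1
    exact Finset.prod_congr rfl fun j _ => by
      rw [show p + 1 + (j:ℕ) = p + ((Fin.succ j : Fin (L+1)) : ℕ) by simp [Fin.val_succ]; omega]
end FSG
lemma rpow_pow_comm {c : ℝ} (hc : 0 ≤ c) (s : ℝ) (k : ℕ) : ((c ^ k : ℝ)) ^ s = (c ^ s) ^ k := by
  rw [← Real.rpow_natCast c k, ← Real.rpow_natCast (c ^ s) k, ← Real.rpow_mul hc,
    ← Real.rpow_mul hc, mul_comm]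

lemma interleave_apply {α : Type} {n : ℕ} (hn : 0 < n) (Ys : Fin n → ℕ → α) (k : ℕ) (j : Fin n) :
    interleave hn Ys (n * k + (j : ℕ)) = Ys j k := by
  have h1 : (n * k + (j : ℕ)) % n = (j : ℕ) := by
    rw [Nat.mul_add_mod]; exact Nat.mod_eq_of_lt j.isLt
  have h2 : (n * k + (j : ℕ)) / n = k := by
    rw [Nat.mul_add_div hn, Nat.div_eq_of_lt j.isLt, add_zero]
  show Ys ⟨(n * k + (j : ℕ)) % n, _⟩ ((n * k + (j : ℕ)) / n) = Ys j k
  have h3 : (⟨(n * k + (j : ℕ)) % n, Nat.mod_lt _ hn⟩ : Fin n) = j := Fin.ext h1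
  rw [h2, h3]

/-- The product gambler over `Fin n → α` simulating `G` block by block. -/
def FSG.blockG {α : Type} [Fintype α] {m : ℕ} (n : ℕ) (G : FSG α m) : FSG (Fin n → α) m where
  δ := fun q a => G.runB q (List.ofFn a)
  bet := fun q a => G.betB q (List.ofFn a)
  bet_nonneg := fun q a => G.betB_nonneg _ q
  bet_sum := fun q => G.betB_sum n q
  q₀ := G.q₀

lemma blockG_state {α : Type} [Fintype α] {m n : ℕ} (hn : 0 < n) (G : FSG α m)
    (Ys : Fin n → ℕ → α) (k : ℕ) :
    (G.blockG n).state (prodSeq Ys) k = G.state (interleave hn Ys) (n * k) := by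
  induction k with
  | zero => rfl
  | succ k ih =>
    show G.runB ((G.blockG n).state (prodSeq Ys) k) (List.ofFn (prodSeq Ys k)) = _
    rw [ih]
    have hfn : List.ofFn (prodSeq Ys k) =
        List.ofFn (fun j : Fin n => interleave hn Ys (n * k + (j:ℕ))) := by
      congr 1; funext j; rw [interleave_apply hn Ys k j]; rfl
    rw [hfn, G.runB_state (interleave hn Ys) n (n*k), Nat.mul_succ]

lemma blockG_capital {α : Type} [Fintype α] {m n : ℕ} (hn : 0 < n) (G : FSG α m)
    (Ys : Fin n → ℕ → α) (s : ℝ) (k : ℕ) :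
    (G.blockG n).capital s (prodSeq Ys) k = G.capital s (interleave hn Ys) (n * k) := by
  induction k with
  | zero => rfl
  | succ k ih =>
    rw [FSG.capital, ih]
    have hR : G.capital s (interleave hn Ys) (n * (k+1)) =
        (∏ j : Fin n, (Fintype.card α : ℝ) ^ s *
          (G.bet (G.state (interleave hn Ys) (n*k + (j:ℕ))) (interleave hn Ys (n*k + (j:ℕ))) : ℝ)) *
          G.capital s (interleave hn Ys) (n*k) := by
      rw [show n * (k+1) = n*k + n by ring]
      exact G.capital_block s (interleave hn Ys) (n*k) n
    rw [hR, Finset.prod_mul_distrib, Finset.prod_const]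
    have hcard : (Fintype.card (Fin n → α) : ℝ) ^ s = ((Fintype.card α : ℝ) ^ s) ^ (Finset.univ (α := Fin n)).card := by
      rw [Finset.card_univ, Fintype.card_fin]
      have : (Fintype.card (Fin n → α) : ℝ) = ((Fintype.card α : ℝ)) ^ n := by
        rw [Fintype.card_fun, Fintype.card_fin]; push_cast; ring
      rw [this, rpow_pow_comm (by positivity)]
    rw [hcard]
    congr 1
    congr 1
    -- bet of blockG = product of bets
    show ((G.betB ((G.blockG n).state (prodSeq Ys) k) (List.ofFn (prodSeq Ys k)) : ℚ) : ℝ) = _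
    rw [blockG_state hn]
    have hfn : List.ofFn (prodSeq Ys k) =
        List.ofFn (fun j : Fin n => interleave hn Ys (n * k + (j:ℕ))) := by
      congr 1; funext j; rw [interleave_apply hn Ys k j]; rfl
    rw [hfn, G.betB_state (interleave hn Ys) n (n*k)]
    push_cast
    rfl

/-- Easy direction: success on the interleaving transfers to the product. -/
lemma succeeds_prod_of_interleave {α : Type} [Fintype α] (hα : 2 ≤ Fintype.card α)
    {n : ℕ} (hn : 0 < n) (Ys : Fin n → ℕ → α) {m : ℕ} (G : FSG α m) {s : ℝ} (hs : 0 ≤ s)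
    (h : G.Succeeds s (interleave hn Ys)) :
    (G.blockG n).Succeeds s (prodSeq Ys) := by
  intro C
  set Z := interleave hn Ys
  set c : ℝ := (Fintype.card α : ℝ) ^ s with hc
  have hc1 : (1:ℝ) ≤ c := FSG.one_le_rpow_card (by omega) hs
  have hcn : (0:ℝ) < c ^ n := by positivity
  obtain ⟨u, hu⟩ := h ((max C 0 + 1) * c ^ n)
  refine ⟨u / n, ?_⟩
  rw [blockG_capital hn]
  have hdecomp : n * (u / n) + u % n = u := Nat.div_add_mod u n
  have hle : G.capital s Z u ≤ c ^ (u % n) * G.capital s Z (n * (u / n)) := by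
    conv_lhs => rw [← hdecomp]
    exact G.capital_le_block hs (by omega) Z (n * (u / n)) (u % n)
  have hmono : c ^ (u % n) ≤ c ^ n :=
    pow_le_pow_right₀ hc1 (le_of_lt (Nat.mod_lt u hn))
  have hcap0 := G.capital_nonneg s Z (n * (u / n))
  have : (max C 0 + 1) * c ^ n < c ^ n * G.capital s Z (n * (u / n)) := by
    calc (max C 0 + 1) * c ^ n < G.capital s Z u := hu
      _ ≤ c ^ (u % n) * G.capital s Z (n * (u / n)) := hle
      _ ≤ c ^ n * G.capital s Z (n * (u / n)) := by
          exact mul_le_mul_of_nonneg_right hmono hcap0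
  have h2 : max C 0 + 1 < G.capital s Z (n * (u / n)) := by
    rw [mul_comm (max C 0 + 1) (c ^ n)] at this
    exact lt_of_mul_lt_mul_left this (le_of_lt hcn)
  have : C ≤ max C 0 := le_max_left _ _
  linarith

/-- The uniform gambler succeeds at any `s > 1`; used for nonemptiness at `s = 2`. -/
lemma uniform_succeeds {α : Type} [Fintype α] (hα : 2 ≤ Fintype.card α) (X : ℕ → α) :
    ∃ G : FSG α 0, G.Succeeds 2 X := by
  have hcpos : (0:ℚ) < (Fintype.card α : ℚ) := by exact_mod_cast Nat.lt_of_lt_of_le two_pos hα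
  refine ⟨⟨fun q _ => q, fun _ _ => 1 / (Fintype.card α : ℚ), fun _ _ => by positivity,
    fun q => by rw [Finset.sum_const, Finset.card_univ, nsmul_eq_mul]; field_simp, 0⟩, ?_⟩
  intro C
  set c : ℝ := (Fintype.card α : ℝ) with hcdef
  have hc2 : (2:ℝ) ≤ c := by rw [hcdef]; exact_mod_cast hα
  set G : FSG α 0 := ⟨fun q _ => q, fun _ _ => 1 / (Fintype.card α : ℚ), fun _ _ => by positivity,
    fun q => by rw [Finset.sum_const, Finset.card_univ, nsmul_eq_mul]; field_simp, 0⟩ with hG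
  have hcap : ∀ k, G.capital 2 X k = c ^ k := by
    intro k
    induction k with
    | zero => simp [FSG.capital]
    | succ k ih =>
      rw [FSG.capital, ih]
      have hb : ((G.bet (G.state X k) (X k) : ℚ) : ℝ) = 1 / c := by
        show (((1 / (Fintype.card α : ℚ)) : ℚ) : ℝ) = 1 / c
        push_cast; rfl
      have hr2 : (c : ℝ) ^ (2:ℝ) = c ^ (2:ℕ) := by
        rw [← Real.rpow_natCast c 2]; norm_num
      rw [hb, hr2]
      have : c ≠ 0 := by linarith
      field_simp
      ring
  obtain ⟨k, hk⟩ := pow_unbounded_of_one_lt C (by linarith : (1:ℝ) < c)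
  exact ⟨k, by rw [hcap k]; exact hk⟩
section Hard

variable {α : Type} [Fintype α] [DecidableEq α] {n m : ℕ}

/-- Perturbed bets. -/
noncomputable def betE (G : FSG (Fin n → α) m) (ε : ℚ) (q : Fin (m+1)) (u : Fin n → α) : ℚ :=
  (1 - ε) * G.bet q u + ε / (Fintype.card (Fin n → α) : ℚ)

/-- Sum of perturbed bets over blocks agreeing with `w` below `j`. -/
noncomputable def FF (G : FSG (Fin n → α) m) (ε : ℚ) (q : Fin (m+1)) (j : ℕ)
    (w : Fin n → α) : ℚ :=
  ∑ u ∈ Finset.univ.filter (fun u : Fin n → α => ∀ i : Fin n, (i:ℕ) < j → u i = w i),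
    betE G ε q u

variable [Nonempty α]

lemma betE_pos (G : FSG (Fin n → α) m) {ε : ℚ} (hε0 : 0 < ε) (hε1 : ε < 1)
    (q : Fin (m+1)) (u : Fin n → α) : 0 < betE G ε q u := by
  have h1 : (0:ℚ) ≤ (1 - ε) * G.bet q u := mul_nonneg (by linarith) (G.bet_nonneg q u)
  have h2 : (0:ℚ) < ε / (Fintype.card (Fin n → α) : ℚ) := by
    apply div_pos hε0
    exact_mod_cast Fintype.card_pos
  unfold betE; linarith

lemma betE_sum (G : FSG (Fin n → α) m) (ε : ℚ) (q : Fin (m+1)) :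
    ∑ u, betE G ε q u = 1 := by
  unfold betE
  rw [Finset.sum_add_distrib, ← Finset.mul_sum, G.bet_sum, Finset.sum_const,
    Finset.card_univ, mul_one, nsmul_eq_mul]
  have hc : (Fintype.card (Fin n → α) : ℚ) ≠ 0 := by exact_mod_cast Fintype.card_ne_zero
  rw [mul_div_cancel₀ _ hc]; ring

lemma FF_congr (G : FSG (Fin n → α) m) (ε : ℚ) (q : Fin (m+1)) (j : ℕ) {w w' : Fin n → α}
    (h : ∀ i : Fin n, (i:ℕ) < j → w i = w' i) : FF G ε q j w = FF G ε q j w' := by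
  unfold FF
  congr 1
  ext u
  simp only [Finset.mem_filter, Finset.mem_univ, true_and]
  exact ⟨fun hu i hi => (hu i hi).trans (h i hi),
    fun hu i hi => (hu i hi).trans (h i hi).symm⟩

lemma FF_pos (G : FSG (Fin n → α) m) {ε : ℚ} (hε0 : 0 < ε) (hε1 : ε < 1)
    (q : Fin (m+1)) (j : ℕ) (w : Fin n → α) : 0 < FF G ε q j w := by
  unfold FF
  apply Finset.sum_pos
  · intro u _; exact betE_pos G hε0 hε1 q u
  · exact ⟨w, by simp⟩

lemma FF_zero (G : FSG (Fin n → α) m) (ε : ℚ) (q : Fin (m+1)) (w : Fin n → α) :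
    FF G ε q 0 w = 1 := by
  unfold FF
  have h : Finset.univ.filter (fun u : Fin n → α => ∀ i : Fin n, (i:ℕ) < 0 → u i = w i) =
      Finset.univ := by
    apply Finset.filter_true_of_mem
    exact fun u _ i hi => absurd hi (Nat.not_lt_zero _)
  rw [h]
  exact betE_sum G ε q

lemma FF_top (G : FSG (Fin n → α) m) (ε : ℚ) (q : Fin (m+1)) (u : Fin n → α) :
    FF G ε q n u = betE G ε q u := by
  unfold FF
  have h : Finset.univ.filter (fun v : Fin n → α => ∀ i : Fin n, (i:ℕ) < n → v i = u i) =
      {u} := by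
    ext v
    simp only [Finset.mem_filter, Finset.mem_univ, true_and, Finset.mem_singleton]
    constructor
    · intro hv; funext i; exact hv i i.isLt
    · rintro rfl; exact fun i _ => rfl
  rw [h, Finset.sum_singleton]

lemma FF_split (G : FSG (Fin n → α) m) (ε : ℚ) (q : Fin (m+1)) (j : Fin n) (w : Fin n → α) :
    ∑ x : α, FF G ε q ((j:ℕ)+1) (Function.update w j x) = FF G ε q (j:ℕ) w := by
  classical
  have hd : Set.PairwiseDisjoint (↑(Finset.univ : Finset α))
      (fun x : α => Finset.univ.filter
        (fun u : Fin n → α => ∀ i : Fin n, (i:ℕ) < (j:ℕ)+1 → u i = Function.update w j x i)) := by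
    intro x _ y _ hxy
    simp only [Function.onFun, Finset.disjoint_left, Finset.mem_filter, Finset.mem_univ, true_and]
    intro u hux huy
    apply hxy
    have h1 := hux j (Nat.lt_succ_self _)
    have h2 := huy j (Nat.lt_succ_self _)
    rw [Function.update_self] at h1 h2
    rw [← h1, ← h2]
  have hset : (Finset.univ : Finset α).biUnion (fun x : α => Finset.univ.filter
        (fun u : Fin n → α => ∀ i : Fin n, (i:ℕ) < (j:ℕ)+1 → u i = Function.update w j x i)) =
      Finset.univ.filter (fun u : Fin n → α => ∀ i : Fin n, (i:ℕ) < (j:ℕ) → u i = w i) := by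
    ext u
    simp only [Finset.mem_biUnion, Finset.mem_filter, Finset.mem_univ, true_and]
    constructor
    · rintro ⟨x, hx⟩ i hi
      have h := hx i (by omega)
      have hij : i ≠ j := by intro hh; rw [hh] at hi; omega
      rwa [Function.update_of_ne hij] at h
    · intro hu
      refine ⟨u j, fun i hi => ?_⟩
      by_cases hij : i = j
      · subst hij; rw [Function.update_self]
      · rw [Function.update_of_ne hij]
        apply hu
        have : (i:ℕ) ≠ (j:ℕ) := fun h => hij (Fin.ext h)
        omega
  unfold FF
  rw [← Finset.sum_biUnion hd, hset]

/-- Encoding of the simulation state space into `Fin (M+1)`. -/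
noncomputable def encQ (hn : 0 < n) (m : ℕ) :
    (Fin (m+1) × Fin n × (Fin n → α)) ≃
      Fin (Fintype.card (Fin (m+1) × Fin n × (Fin n → α)) - 1 + 1) := by
  haveI : Nonempty (Fin n) := ⟨⟨0, hn⟩⟩
  exact (Fintype.equivFin _).trans (finCongr (Nat.succ_pred_eq_of_pos Fintype.card_pos).symm)

/-- One step of the simulation. -/
def stepQ (G : FSG (Fin n → α) m) (p : Fin (m+1) × Fin n × (Fin n → α)) (x : α) :
    Fin (m+1) × Fin n × (Fin n → α) :=
  if h : (p.2.1 : ℕ) + 1 < n then (p.1, ⟨(p.2.1:ℕ)+1, h⟩, Function.update p.2.2 p.2.1 x)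
  else (G.δ p.1 (Function.update p.2.2 p.2.1 x), ⟨0, p.2.1.pos⟩, Function.update p.2.2 p.2.1 x)

/-- Conditional bets of the simulation. -/
noncomputable def betQ (G : FSG (Fin n → α) m) (ε : ℚ) (p : Fin (m+1) × Fin n × (Fin n → α))
    (x : α) : ℚ :=
  FF G ε p.1 ((p.2.1:ℕ)+1) (Function.update p.2.2 p.2.1 x) / FF G ε p.1 (p.2.1:ℕ) p.2.2

/-- The interleaving gambler simulating the block gambler `G`. -/
noncomputable def interG (hn : 0 < n) (G : FSG (Fin n → α) m) (ε : ℚ) (hε0 : 0 < ε)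
    (hε1 : ε < 1) : FSG α (Fintype.card (Fin (m+1) × Fin n × (Fin n → α)) - 1) where
  δ := fun p x => encQ hn m (stepQ G ((encQ hn m).symm p) x)
  bet := fun p x => betQ G ε ((encQ hn m).symm p) x
  bet_nonneg := fun p x =>
    div_nonneg (FF_pos G hε0 hε1 _ _ _).le (FF_pos G hε0 hε1 _ _ _).le
  bet_sum := fun p => by
    unfold betQ
    rw [← Finset.sum_div, FF_split G ε _ _ _]
    exact div_self (FF_pos G hε0 hε1 _ _ _).ne'
  q₀ := encQ hn m (G.q₀, ⟨0, hn⟩, Classical.arbitrary _)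

end Hard
lemma rpow_nat_mul' {c : ℝ} (hc : 0 ≤ c) (t : ℝ) (k : ℕ) : (c ^ t) ^ k = c ^ (t * k) := by
  rw [← Real.rpow_natCast (c ^ t) k, ← Real.rpow_mul hc]

lemma succeeds_interleave_of_prod {α : Type} [Fintype α] (hα : 2 ≤ Fintype.card α)
    {n : ℕ} (hn : 0 < n) (Ys : Fin n → ℕ → α) {m : ℕ} (G : FSG (Fin n → α) m) {s t : ℝ}
    (hs : 0 ≤ s) (hst : s < t) (hG : G.Succeeds s (prodSeq Ys)) :
    ∃ (M : ℕ) (G' : FSG α M), G'.Succeeds t (interleave hn Ys) := by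
  classical
  haveI : Nonempty α := Fintype.card_pos_iff.mp (by omega)
  set c : ℝ := (Fintype.card α : ℝ) with hc
  have hc2 : (2:ℝ) ≤ c := by rw [hc]; exact_mod_cast hα
  have hc1 : (1:ℝ) < c := by linarith
  have hc0 : (0:ℝ) < c := by linarith
  have hexp : c ^ ((s - t) * n) < 1 := by
    apply Real.rpow_lt_one_of_one_lt_of_neg hc1
    have hn' : (0:ℝ) < (n:ℝ) := by exact_mod_cast hn
    nlinarith
  have hexp0 : (0:ℝ) < c ^ ((s - t) * n) := Real.rpow_pos_of_pos hc0 _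
  obtain ⟨ε, hε0', hε1'⟩ := exists_rat_btwn (show (0:ℝ) < 1 - c ^ ((s - t) * n) by linarith)
  have hε0 : 0 < ε := by exact_mod_cast hε0'
  have hε1 : ε < 1 := by
    have h : (ε:ℝ) < 1 := by linarith
    exact_mod_cast h
  refine ⟨_, interG hn G ε hε0 hε1, ?_⟩
  set G' := interG hn G ε hε0 hε1 with hG'
  set Z := interleave hn Ys with hZ
  set P := prodSeq Ys with hP
  set e := encQ (α := α) (n := n) hn m with he
  have hZP : ∀ (k : ℕ) (j : Fin n), Z (n*k + (j:ℕ)) = P k j := fun k j =>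
    interleave_apply hn Ys k j
  -- per-block analysis
  have block : ∀ k : ℕ, (∃ w, G'.state Z (n*k) = e (G.state P k, ⟨0, hn⟩, w)) →
      ((∃ w, G'.state Z (n*(k+1)) = e (G.state P (k+1), ⟨0, hn⟩, w)) ∧
        G'.capital t Z (n*(k+1)) =
          (c ^ t) ^ n * ((betE G ε (G.state P k) (P k) : ℚ) : ℝ) * G'.capital t Z (n*k)) := by
    intro k hk
    set qk := G.state P k with hqk
    set W : Fin n → α := fun i : Fin n => Z (n*k + (i:ℕ)) with hW
    have inner : ∀ j : ℕ, j ≤ n →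
        (G'.capital t Z (n*k + j) =
            (c ^ t) ^ j * ((FF G ε qk j W : ℚ) : ℝ) * G'.capital t Z (n*k)) ∧
          (∀ h : j < n, ∃ w, G'.state Z (n*k + j) = e (qk, ⟨j, h⟩, w) ∧
            ∀ i : Fin n, (i:ℕ) < j → w i = Z (n*k + (i:ℕ))) := by
      intro j
      induction j with
      | zero =>
        intro _
        constructor
        · rw [FF_zero]; simp
        · intro h
          obtain ⟨w, hw⟩ := hk
          exact ⟨w, hw, fun i hi => absurd hi (by omega)⟩
      | succ j ihj =>
        intro hj1
        have hjn : j < n := by omega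
        obtain ⟨hcap, hstate⟩ := ihj (by omega)
        obtain ⟨w, hw, hagree⟩ := hstate hjn
        set x := Z (n*k + j) with hx
        set w' := Function.update w ⟨j, hjn⟩ x with hw'
        have hagree' : ∀ i : Fin n, (i:ℕ) < j + 1 → w' i = Z (n*k + (i:ℕ)) := by
          intro i hi
          by_cases hij : i = ⟨j, hjn⟩
          · subst hij; rw [hw', Function.update_self]
          · rw [hw', Function.update_of_ne hij]
            apply hagree
            have hne : (i:ℕ) ≠ j := fun h => hij (Fin.ext h)
            omega
        have hstep : G'.state Z (n*k + (j+1)) = e (stepQ G (qk, ⟨j, hjn⟩, w) x) := by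
          rw [show n*k + (j+1) = (n*k + j) + 1 from rfl]
          show e (stepQ G (e.symm (G'.state Z (n*k+j))) (Z (n*k+j))) = _
          rw [hw, Equiv.symm_apply_apply, ← hx]
        have hnum : FF G ε qk (j+1) w' = FF G ε qk (j+1) W :=
          FF_congr G ε qk (j+1) (fun i hi => (hagree' i hi).trans rfl)
        have hden : FF G ε qk j w = FF G ε qk j W :=
          FF_congr G ε qk j (fun i hi => hagree i hi)
        have hFFj0 : ((FF G ε qk j W : ℚ) : ℝ) ≠ 0 := by
          exact_mod_cast (FF_pos G hε0 hε1 qk j W).ne'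
        constructor
        · -- capital
          rw [show n*k + (j+1) = (n*k + j) + 1 from rfl, FSG.capital]
          have hbet : ((G'.bet (G'.state Z (n*k + j)) (Z (n*k + j)) : ℚ) : ℝ) =
              ((FF G ε qk (j+1) W : ℚ) : ℝ) / ((FF G ε qk j W : ℚ) : ℝ) := by
            rw [hw]
            show ((betQ G ε (e.symm (e (qk, ⟨j, hjn⟩, w))) (Z (n*k+j)) : ℚ) : ℝ) = _
            rw [Equiv.symm_apply_apply]
            unfold betQ
            dsimp only
            rw [← hx, ← hw', hnum, hden]
            push_cast
            rfl
          rw [hbet, hcap, ← hc]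
          rw [pow_succ]
          field_simp
        · -- state
          intro h
          refine ⟨w', ?_, hagree'⟩
          have hstep' : stepQ G (qk, ⟨j, hjn⟩, w) x = (qk, ⟨j+1, h⟩, w') := by
            unfold stepQ
            dsimp only
            rw [dif_pos h]
          rw [hstep, hstep']
    -- conclude the block facts
    have hWP : W = P k := funext fun i => hZP k i
    constructor
    · -- state at the next block start
      have hn1 : n - 1 < n := by omega
      obtain ⟨w, hw, hagree⟩ := (inner (n-1) (by omega)).2 hn1
      set x := Z (n*k + (n-1)) with hx
      set u := Function.update w ⟨n-1, hn1⟩ x with hu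
      have huP : u = P k := by
        funext i
        by_cases hij : i = ⟨n-1, hn1⟩
        · subst hij
          rw [hu, Function.update_self, hx, ← hZP k ⟨n-1, hn1⟩]
        · rw [hu, Function.update_of_ne hij]
          have hne : (i:ℕ) ≠ n - 1 := fun h => hij (Fin.ext h)
          have hlt : (i:ℕ) < n - 1 := by have := i.isLt; omega
          rw [hagree i hlt, ← hWP]
      refine ⟨u, ?_⟩
      have hstep : G'.state Z ((n*k + (n-1)) + 1) = e (stepQ G (qk, ⟨n-1, hn1⟩, w) x) := by
        show e (stepQ G (e.symm (G'.state Z (n*k+(n-1)))) (Z (n*k+(n-1)))) = _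
        rw [hw, Equiv.symm_apply_apply, ← hx]
      have hstep' : stepQ G (qk, ⟨n-1, hn1⟩, w) x = (G.δ qk u, ⟨0, hn⟩, u) := by
        unfold stepQ
        dsimp only
        rw [dif_neg (by omega)]
      have hfin : G.δ qk u = G.state P (k+1) := by rw [huP]; rfl
      have hmul : n*(k+1) = (n*k + (n-1)) + 1 := by
        have h : n*(k+1) = n*k + n := by ring
        omega
      rw [hmul, hstep, hstep', hfin]
    · -- capital over the block
      have := (inner n le_rfl).1
      rw [show n*k + n = n*(k+1) by ring] at this
      rw [this, FF_top, hWP]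
  -- outer induction
  have main : ∀ k : ℕ, (∃ w, G'.state Z (n*k) = e (G.state P k, ⟨0,hn⟩, w)) ∧
      G.capital s P k ≤ G'.capital t Z (n*k) := by
    intro k
    induction k with
    | zero =>
      constructor
      · exact ⟨Classical.arbitrary _, rfl⟩
      · show G.capital s P 0 ≤ G'.capital t Z (n*0)
        rw [show n*0 = 0 by ring]
        simp [FSG.capital]
    | succ k ih =>
      obtain ⟨hkst, hkcap⟩ := ih
      obtain ⟨hst', hcapeq⟩ := block k hkst
      refine ⟨hst', ?_⟩
      rw [hcapeq, FSG.capital]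
      set qk := G.state P k with hqk
      have hcardβ : ((Fintype.card (Fin n → α) : ℝ)) ^ s = (c^s)^n := by
        have h1 : (Fintype.card (Fin n → α) : ℝ) = c ^ n := by
          rw [Fintype.card_fun, Fintype.card_fin, hc]; push_cast; ring
        rw [h1, rpow_pow_comm hc0.le]
      have hb0 : (0:ℝ) ≤ (G.bet qk (P k) : ℝ) := by exact_mod_cast G.bet_nonneg qk (P k)
      have hbetE0 : (0:ℝ) ≤ ((betE G ε qk (P k) : ℚ) : ℝ) := by
        exact_mod_cast (betE_pos G hε0 hε1 qk (P k)).le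
      have hbety : (1 - (ε:ℝ)) * (G.bet qk (P k) : ℝ) ≤ ((betE G ε qk (P k) : ℚ) : ℝ) := by
        unfold betE
        push_cast
        have hcβ : (0:ℝ) < (Fintype.card (Fin n → α) : ℝ) := by exact_mod_cast Fintype.card_pos
        have : (0:ℝ) ≤ (ε:ℝ) / (Fintype.card (Fin n → α) : ℝ) := by positivity
        linarith
      have hkey : (c^s)^n ≤ (c^t)^n * (1 - (ε:ℝ)) := by
        rw [rpow_nat_mul' hc0.le, rpow_nat_mul' hc0.le]
        have h4 : c^(t*(n:ℕ)) * c^((s-t)*n) = c^(s*(n:ℕ)) := by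
          rw [← Real.rpow_add hc0]; congr 1; push_cast; ring
        have h5 : c ^ ((s-t)*(n:ℝ)) ≤ 1 - (ε:ℝ) := by linarith
        have h6 : (0:ℝ) < c^(t*(n:ℕ)) := Real.rpow_pos_of_pos hc0 _
        calc c^(s*(n:ℕ)) = c^(t*(n:ℕ)) * c^((s-t)*n) := h4.symm
          _ ≤ c^(t*(n:ℕ)) * (1 - (ε:ℝ)) := by
              apply mul_le_mul_of_nonneg_left _ h6.le
              exact_mod_cast h5
      have hfac : ((Fintype.card (Fin n → α) : ℝ)) ^ s * (G.bet qk (P k) : ℝ) ≤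
          (c^t)^n * ((betE G ε qk (P k) : ℚ) : ℝ) := by
        rw [hcardβ]
        calc (c^s)^n * (G.bet qk (P k) : ℝ)
            ≤ ((c^t)^n * (1 - (ε:ℝ))) * (G.bet qk (P k) : ℝ) :=
              mul_le_mul_of_nonneg_right hkey hb0
          _ = (c^t)^n * ((1 - (ε:ℝ)) * (G.bet qk (P k) : ℝ)) := by ring
          _ ≤ (c^t)^n * ((betE G ε qk (P k) : ℚ) : ℝ) := by
              apply mul_le_mul_of_nonneg_left hbety
              positivity
      calc ((Fintype.card (Fin n → α) : ℝ)) ^ s * (G.bet qk (P k) : ℝ) * G.capital s P k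
          ≤ ((c^t)^n * ((betE G ε qk (P k) : ℚ) : ℝ)) * G'.capital t Z (n*k) := by
            apply mul_le_mul hfac hkcap (G.capital_nonneg s P k)
            positivity
        _ = (c^t)^n * ((betE G ε qk (P k) : ℚ) : ℝ) * G'.capital t Z (n*k) := by ring
  intro C
  obtain ⟨k, hk⟩ := hG C
  exact ⟨n*k, lt_of_lt_of_le hk (main k).2⟩
lemma succeeds_equiv {α γ : Type} [Fintype α] [Fintype γ] (φ : α ≃ γ) (X : ℕ → α) {m : ℕ}
    (G : FSG α m) (s : ℝ) (h : G.Succeeds s X) :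
    ∃ G' : FSG γ m, G'.Succeeds s (fun k => φ (X k)) := by
  refine ⟨⟨fun q c => G.δ q (φ.symm c), fun q c => G.bet q (φ.symm c),
    fun q c => G.bet_nonneg q _, fun q => (Equiv.sum_comp φ.symm (G.bet q)).trans (G.bet_sum q),
    G.q₀⟩, ?_⟩
  set G' : FSG γ m := ⟨fun q c => G.δ q (φ.symm c), fun q c => G.bet q (φ.symm c),
    fun q c => G.bet_nonneg q _, fun q => (Equiv.sum_comp φ.symm (G.bet q)).trans (G.bet_sum q),
    G.q₀⟩ with hG'
  have hstate : ∀ k, G'.state (fun k => φ (X k)) k = G.state X k := by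
    intro k
    induction k with
    | zero => rfl
    | succ k ih =>
      show G'.δ (G'.state (fun k => φ (X k)) k) (φ (X k)) = _
      rw [ih]
      show G.δ (G.state X k) (φ.symm (φ (X k))) = _
      rw [Equiv.symm_apply_apply]
      rfl
  have hcard : (Fintype.card γ : ℝ) = (Fintype.card α : ℝ) := by
    exact_mod_cast (Fintype.card_congr φ).symm
  have hcap : ∀ k, G'.capital s (fun k => φ (X k)) k = G.capital s X k := by
    intro k
    induction k with
    | zero => rfl
    | succ k ih =>
      rw [FSG.capital, FSG.capital, ih, hstate k, hcard]
      congr 2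
      show ((G.bet (G.state X k) (φ.symm (φ (X k))) : ℚ) : ℝ) = _
      rw [Equiv.symm_apply_apply]
  intro C
  obtain ⟨k, hk⟩ := h C
  exact ⟨k, by rw [hcap k]; exact hk⟩

lemma dimFS_equiv {α γ : Type} [Fintype α] [Fintype γ] (φ : α ≃ γ) (X : ℕ → α) :
    dimFS (fun k => φ (X k)) = dimFS X := by
  unfold dimFS
  congr 1
  ext s
  simp only [Set.mem_setOf_eq]
  constructor
  · rintro ⟨hs, m, G, hG⟩
    obtain ⟨G', hG'⟩ := succeeds_equiv φ.symm (fun k => φ (X k)) G s hG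
    refine ⟨hs, m, G', ?_⟩
    have hXX : (fun k => φ.symm (φ (X k))) = X := by funext k; simp
    rwa [hXX] at hG'
  · rintro ⟨hs, m, G, hG⟩
    obtain ⟨G', hG'⟩ := succeeds_equiv φ X G s hG
    exact ⟨hs, m, G', hG'⟩

lemma dimFS_prod_eq_interleave {α : Type} [Fintype α] (hα : 2 ≤ Fintype.card α)
    {n : ℕ} (hn : 0 < n) (Ys : Fin n → ℕ → α) :
    dimFS (prodSeq Ys) = dimFS (interleave hn Ys) := by
  classical
  set A := {s : ℝ | 0 ≤ s ∧ ∃ (m : ℕ) (G : FSG (Fin n → α) m), G.Succeeds s (prodSeq Ys)}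
    with hA
  set B := {s : ℝ | 0 ≤ s ∧ ∃ (m : ℕ) (G : FSG α m), G.Succeeds s (interleave hn Ys)} with hB
  have hBA : B ⊆ A := by
    rintro s ⟨hs, m, G, hG⟩
    exact ⟨hs, m, G.blockG n, succeeds_prod_of_interleave hα hn Ys G hs hG⟩
  have hAB : ∀ s ∈ A, ∀ t, s < t → t ∈ B := by
    rintro s ⟨hs, m, G, hG⟩ t hst
    obtain ⟨M, G', hG'⟩ := succeeds_interleave_of_prod hα hn Ys G hs hst hG
    exact ⟨le_trans hs hst.le, M, G', hG'⟩
  have hBne : B.Nonempty := by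
    obtain ⟨G, hG⟩ := uniform_succeeds hα (interleave hn Ys)
    exact ⟨2, by norm_num, 0, G, hG⟩
  have hAne : A.Nonempty := Set.Nonempty.mono hBA hBne
  have hAbdd : BddBelow A := ⟨0, fun s hs => hs.1⟩
  have hBbdd : BddBelow B := ⟨0, fun s hs => hs.1⟩
  show sInf A = sInf B
  apply le_antisymm
  · exact csInf_le_csInf hAbdd hBne hBA
  · apply le_of_forall_pos_le_add
    intro δ hδ
    obtain ⟨a, haA, ha⟩ := exists_lt_of_csInf_lt hAne (lt_add_of_pos_right (sInf A) hδ)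
    exact csInf_le hBbdd (hAB a haA _ ha)
/-- the finite-state dimensions of the product sequence, any permuted product
sequence, any permuted interleaving, and the interleaving of `Y₀, …, Y_{n-1}` all coincide. -/
theorem dimFS_prodSeq_interleave_perm {α : Type} [Fintype α] (hα : 2 ≤ Fintype.card α)
    {n : ℕ} (hn : 0 < n) (Ys : Fin n → ℕ → α) (σ : Equiv.Perm (Fin n)) :
    dimFS (prodSeq Ys) = dimFS (prodSeq (fun i => Ys (σ i))) ∧
    dimFS (prodSeq Ys) = dimFS (interleave hn (fun i => Ys (σ i))) ∧
    dimFS (prodSeq Ys) = dimFS (interleave hn Ys) := by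
  have key : ∀ Zs : Fin n → ℕ → α, dimFS (prodSeq Zs) = dimFS (interleave hn Zs) :=
    fun Zs => dimFS_prod_eq_interleave hα hn Zs
  have hperm : dimFS (prodSeq Ys) = dimFS (prodSeq (fun i => Ys (σ i))) := by
    have heq : prodSeq (fun i => Ys (σ i)) =
        fun k => (Equiv.arrowCongr σ.symm (Equiv.refl α)) (prodSeq Ys k) := by
      funext k i
      rfl
    rw [heq, dimFS_equiv]
  exact ⟨hperm, by rw [hperm]; exact key _, key Ys⟩
end
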